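/- arXiv:1011.4591 — 5 statements merged into one kernel-verified Lean document; each statement's English description precedes it below -/
import Mathlib

section
/- Let τ ∈ ℂ with Im τ > 0, A ∈ GL_n(ℂ) and B ∈ GL_m(ℂ). Assume that for every eigenvalue α of A, every eigenvalue β of B, and every k ∈ ℤ, one has α ≠ β·exp(2πikτ). Then every holomorphic function Φ : ℂ → Mat_{m×n}(ℂ) satisfying Φ(z+1) = Φ(z) and Φ(z+τ)·A = B·Φ(z) for all z ∈ ℂ is identically zero. -/
open Complex Matrix Polynomial
open scoped TensorProduct

noncomputable section

/-- π as a complex number. -/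
def πc : ℂ := Real.pi

lemma scalar_vanish {τ : ℂ} (hτ : 0 < τ.im) {γ : ℂ}
    (hγ : ∀ k : ℤ, γ ≠ Complex.exp (2 * πc * I * (k : ℂ) * τ))
    {f : ℂ → ℂ} (hf : Differentiable ℂ f)
    (h1 : ∀ z, f (z + 1) = f z) (h2 : ∀ z, f (z + τ) = γ * f z) :
    ∀ z, f z = 0 := by
  rcases eq_or_ne γ 0 with hγ0 | hγ0
  · intro z
    have h := h2 (z - τ)
    rw [sub_add_cancel, hγ0, zero_mul] at h
    exact h
  -- nonzero case
  set c : ℝ := Real.log ‖γ‖ / (2 * Real.pi * τ.im) with hc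
  set g : ℂ → ℂ := fun z => f z * Complex.exp (2 * πc * I * (c : ℂ) * z) with hg
  have hgd : Differentiable ℂ g :=
    hf.mul ((differentiable_id.const_mul (2 * πc * I * (c : ℂ))).cexp)
  have hre : ∀ w : ℂ, (2 * πc * I * (c : ℂ) * w).re = -(2 * Real.pi * c * w.im) := by
    intro w
    simp [πc, Complex.mul_re, Complex.mul_im]
    try ring
  have habsg : ∀ z, ‖g z‖
      = ‖f z‖ * Real.exp (-(2 * Real.pi * c * z.im)) := by
    intro z
    rw [hg]
    simp only [norm_mul, Complex.norm_exp, hre]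
  have h2π : (2 * Real.pi * τ.im) ≠ 0 := by positivity
  have hγpos : 0 < ‖γ‖ := norm_pos_iff.mpr hγ0
  have hkey : ‖γ‖ * Real.exp (-(2 * Real.pi * c * τ.im)) = 1 := by
    have hcl : 2 * Real.pi * c * τ.im = Real.log ‖γ‖ := by
      rw [hc]; field_simp
    rw [hcl, Real.exp_neg, Real.exp_log hγpos, mul_inv_cancel₀ hγpos.ne']
  have hP1 : Function.Periodic (fun z => ‖g z‖) 1 := by
    intro z
    simp only [habsg, h1]
    simp
  have hPτ : Function.Periodic (fun z => ‖g z‖) τ := by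
    intro z
    simp only [habsg, h2, norm_mul, Complex.add_im]
    rw [mul_add (2 * Real.pi * c), neg_add, Real.exp_add]
    calc ‖γ‖ * ‖f z‖ *
          (Real.exp (-(2 * Real.pi * c * z.im)) * Real.exp (-(2 * Real.pi * c * τ.im)))
        = (‖γ‖ * Real.exp (-(2 * Real.pi * c * τ.im))) *
          (‖f z‖ * Real.exp (-(2 * Real.pi * c * z.im))) := by ring
      _ = ‖f z‖ * Real.exp (-(2 * Real.pi * c * z.im)) := by rw [hkey, one_mul]
  -- compact fundamental domain
  set K : Set ℂ := (fun p : ℝ × ℝ => (p.1 : ℂ) + (p.2 : ℂ) * τ) '' (Set.Icc 0 1 ×ˢ Set.Icc 0 1)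
    with hK
  have hKc : IsCompact K := by
    apply (isCompact_Icc.prod isCompact_Icc).image
    exact (Complex.continuous_ofReal.comp continuous_fst).add
      ((Complex.continuous_ofReal.comp continuous_snd).mul continuous_const)
  have hKne : K.Nonempty := ⟨(0 : ℝ) + (0 : ℝ) * τ, ⟨(0, 0), by simp, rfl⟩⟩
  obtain ⟨z₀, hz₀K, hmax'⟩ := hKc.exists_isMaxOn hKne
    ((continuous_norm.comp hgd.continuous).continuousOn)
  have hmax : ∀ y ∈ K, ‖g y‖ ≤ ‖g z₀‖ := fun y hy => hmax' hy
  -- global bound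
  have hbound : ∀ z, ‖g z‖ ≤ ‖g z₀‖ := by
    intro z
    set t : ℝ := z.im / τ.im with ht
    set s : ℝ := z.re - t * τ.re with hs
    have hz : z = (s : ℂ) + (t : ℂ) * τ := by
      apply Complex.ext
      · simp [hs]
      · simp [ht]
        field_simp
    set w : ℂ := ((Int.fract s : ℝ) : ℂ) + ((Int.fract t : ℝ) : ℂ) * τ with hw
    have hwK : w ∈ K := ⟨(Int.fract s, Int.fract t),
      ⟨⟨Int.fract_nonneg _, (Int.fract_lt_one _).le⟩,
       ⟨Int.fract_nonneg _, (Int.fract_lt_one _).le⟩⟩, rfl⟩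
    have hzw : z = w + ((⌊s⌋ : ℤ) : ℂ) + ((⌊t⌋ : ℤ) : ℂ) * τ := by
      rw [hz, hw, Int.fract, Int.fract]
      push_cast
      ring
    have e1 : ‖g (w + ((⌊s⌋ : ℤ) : ℂ) + ((⌊t⌋ : ℤ) : ℂ) * τ)‖ = ‖g w‖ := by
      have hτp := (hPτ.int_mul ⌊t⌋) (w + ((⌊s⌋ : ℤ) : ℂ))
      have h1p := (hP1.int_mul ⌊s⌋) w
      rw [hτp]
      simpa using h1p
    rw [hzw, e1]
    exact hmax w hwK
  have hbd : Bornology.IsBounded (Set.range g) := by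
    rw [isBounded_iff_forall_norm_le]
    refine ⟨‖g z₀‖, ?_⟩
    rintro y ⟨z, rfl⟩
    simpa using hbound z
  have hgconst : ∀ z, g z = g 0 := fun z => hgd.apply_eq_apply_of_bounded hbd z 0
  have hf_eq : ∀ z, f z = g 0 * Complex.exp (-(2 * πc * I * (c : ℂ) * z)) := by
    intro z
    rw [Complex.exp_neg, ← hgconst z, hg]
    field_simp
  rcases eq_or_ne (g 0) 0 with hg0 | hg0
  · intro z
    rw [hf_eq z, hg0, zero_mul]
  exfalso
  have hexp1 : Complex.exp (-(2 * πc * I * (c : ℂ))) = 1 := by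
    have h := h1 0
    rw [hf_eq (0 + 1), hf_eq 0] at h
    have h' := mul_left_cancel₀ hg0 h
    simpa using h'
  obtain ⟨k, hk⟩ := Complex.exp_eq_one_iff.mp hexp1
  have hπI : (2 * πc * I) ≠ 0 := by
    simp [πc, Real.pi_ne_zero, Complex.I_ne_zero, Complex.ofReal_ne_zero]
  have hck : (c : ℂ) = -(k : ℂ) := by
    have : (2 * πc * I) * (-(c : ℂ)) = (2 * πc * I) * (k : ℂ) := by
      rw [πc] at hk ⊢
      linear_combination hk
    have h3 := mul_left_cancel₀ hπI this
    linear_combination -h3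
  apply hγ k
  have hτeq : f (0 + τ) = γ * f 0 := h2 0
  rw [hf_eq (0 + τ), hf_eq 0, zero_add] at hτeq
  have h5 : g 0 * Complex.exp (-(2 * πc * I * (c : ℂ) * τ)) = g 0 * γ := by
    rw [hτeq, mul_zero, neg_zero, Complex.exp_zero, mul_one, mul_comm]
  have this := mul_left_cancel₀ hg0 h5
  rw [← this]
  congr 1
  rw [hck]
  ring


lemma eval_charpoly' {N : ℕ} (M : Matrix (Fin N) (Fin N) ℂ) (r : ℂ) :
    M.charpoly.eval r = (r • (1 : Matrix (Fin N) (Fin N) ℂ) - M).det := by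
  rw [Matrix.charpoly, ← Polynomial.coe_evalRingHom, RingHom.map_det]
  congr 1
  ext i j
  by_cases h : i = j
  · subst h
    simp [Matrix.charmatrix_apply_eq, Matrix.one_apply]
  · simp [Matrix.charmatrix_apply_ne _ _ _ h, Matrix.one_apply, h]

lemma mem_spectrum_of_det {N : ℕ} (M : Matrix (Fin N) (Fin N) ℂ) (r : ℂ)
    (h : (r • (1 : Matrix (Fin N) (Fin N) ℂ) - M).det = 0) : r ∈ spectrum ℂ M := by
  rw [spectrum.mem_iff]
  intro hu
  rw [Algebra.algebraMap_eq_smul_one] at hu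
  exact not_isUnit_zero (h ▸ (Matrix.isUnit_iff_isUnit_det _).mp hu)

lemma specK {n m : ℕ} {A : Matrix (Fin n) (Fin n) ℂ} {B : Matrix (Fin m) (Fin m) ℂ}
    (hB : IsUnit B) {γ : ℂ} {X : Matrix (Fin m) (Fin n) ℂ} (hX : X ≠ 0)
    (heq : B * X = γ • (X * A)) :
    ∃ α ∈ spectrum ℂ A, ∃ β ∈ spectrum ℂ B, β = γ * α := by
  have hγ0 : γ ≠ 0 := by
    rintro rfl
    have hBX0 : B * X = 0 := by simpa using heq
    obtain ⟨u, hu⟩ := hB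
    apply hX
    have hX0 : X = ((u⁻¹ : (Matrix (Fin m) (Fin m) ℂ)ˣ) : Matrix (Fin m) (Fin m) ℂ) * (B * X) := by
      rw [← hu, ← Matrix.mul_assoc]
      norm_cast
      simp
    rw [hBX0, Matrix.mul_zero] at hX0
    exact hX0
  have hBX : B * X = X * (γ • A) := by rw [Matrix.mul_smul]; exact heq
  have hpow : ∀ k : ℕ, B ^ k * X = X * (γ • A) ^ k := by
    intro k; induction k with
    | zero => simp
    | succ k ih =>
        rw [pow_succ, pow_succ, Matrix.mul_assoc, hBX, ← Matrix.mul_assoc, ih, Matrix.mul_assoc]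
  have hpoly : ∀ p : ℂ[X], (Polynomial.aeval B p) * X = X * (Polynomial.aeval (γ • A) p) := by
    intro p
    induction p using Polynomial.induction_on' with
    | add p q hp hq => rw [map_add, map_add, Matrix.add_mul, Matrix.mul_add, hp, hq]
    | monomial k c =>
        simp only [Polynomial.aeval_monomial, Algebra.algebraMap_eq_smul_one,
          smul_mul_assoc, one_mul, Matrix.mul_smul, hpow k]
        rw [Matrix.smul_mul, hpow k]
  set p := (γ • A).charpoly with hp
  have hzero : (Polynomial.aeval B p) * X = 0 := by
    rw [hpoly p, hp, Matrix.aeval_self_charpoly, Matrix.mul_zero]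
  have hex : ∃ i j, X i j ≠ 0 := by
    by_contra h
    push_neg at h
    exact hX (by ext i j; simpa using h i j)
  obtain ⟨i₀, j₀, hij⟩ := hex
  have hv : (Polynomial.aeval B p).mulVec (fun i => X i j₀) = 0 := by
    ext i
    have h := congrFun (congrFun hzero i) j₀
    simpa [Matrix.mul_apply, Matrix.mulVec, dotProduct] using h
  have hdet : (Polynomial.aeval B p).det = 0 := by
    rw [← Matrix.exists_mulVec_eq_zero_iff]
    exact ⟨_, fun h => hij (congrFun h i₀), hv⟩
  have hmonic : p.Monic := Matrix.charpoly_monic _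
  have hfact := (IsAlgClosed.splits p).eq_prod_roots_of_monic hmonic
  set l : List ℂ := p.roots.toList with hl
  have hfact' : p = (l.map (fun a => Polynomial.X - C a)).prod := by
    conv_lhs => rw [hfact, ← Multiset.coe_toList p.roots]
    rw [Multiset.map_coe, Multiset.prod_coe]
  have h1 : Polynomial.aeval B p
      = (l.map (fun a => B - a • (1 : Matrix (Fin m) (Fin m) ℂ))).prod := by
    conv_lhs => rw [hfact']
    rw [map_list_prod, List.map_map]
    simp [Function.comp_def, Algebra.algebraMap_eq_smul_one]
  have hdet2 : (l.map (fun a => (B - a • (1 : Matrix (Fin m) (Fin m) ℂ)).det)).prod = 0 := by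
    have h2 := congrArg Matrix.det h1
    rw [hdet] at h2
    rw [← Matrix.coe_detMonoidHom, map_list_prod, List.map_map] at h2
    simpa [Matrix.coe_detMonoidHom, Function.comp_def] using h2.symm
  obtain ⟨a, haroot', hadet⟩ := List.mem_map.mp (List.prod_eq_zero_iff.mp hdet2)
  have haroot : a ∈ p.roots := by rwa [← Multiset.mem_toList]
  refine ⟨a / γ, ?_, a, ?_, by field_simp⟩
  · apply mem_spectrum_of_det
    have hroot : p.eval a = 0 := Polynomial.isRoot_of_mem_roots haroot
    rw [eval_charpoly'] at hroot
    have hfac : a • (1 : Matrix (Fin n) (Fin n) ℂ) - γ • A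
        = γ • ((a / γ) • (1 : Matrix (Fin n) (Fin n) ℂ) - A) := by
      rw [smul_sub, smul_smul]
      field_simp
    rw [hfac, Matrix.det_smul] at hroot
    exact (smul_eq_zero.mp hroot).resolve_left (pow_ne_zero _ hγ0)
  · apply mem_spectrum_of_det
    rw [← neg_sub B (a • 1), Matrix.det_neg, hadet, mul_zero]


/-- The linear map `X ↦ B X A⁻¹`. -/
def Lmap {m n : ℕ} (A : Matrix (Fin n) (Fin n) ℂ) (B : Matrix (Fin m) (Fin m) ℂ) :
    Matrix (Fin m) (Fin n) ℂ →ₗ[ℂ] Matrix (Fin m) (Fin n) ℂ where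
  toFun X := B * X * A⁻¹
  map_add' X Y := by simp [Matrix.mul_add, Matrix.add_mul]
  map_smul' c X := by simp [Matrix.mul_smul, Matrix.smul_mul]

/-- If no eigenvalue of A equals an eigenvalue of B times exp(2πikτ), then every holomorphic
Φ with Φ(z+1) = Φ(z) and Φ(z+τ)·A = B·Φ(z) vanishes identically. -/
theorem hom_vanishing (n m : ℕ) (τ : ℂ) (hτ : 0 < τ.im)
    (A : Matrix (Fin n) (Fin n) ℂ) (hA : IsUnit A)
    (B : Matrix (Fin m) (Fin m) ℂ) (hB : IsUnit B)
    (hspec : ∀ α ∈ spectrum ℂ A, ∀ β ∈ spectrum ℂ B, ∀ k : ℤ,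
      α ≠ β * Complex.exp (2 * πc * I * (k : ℂ) * τ))
    (Φ : ℂ → Matrix (Fin m) (Fin n) ℂ)
    (hdiff : ∀ i j, Differentiable ℂ fun z => Φ z i j)
    (hper : ∀ z, Φ (z + 1) = Φ z)
    (hqp : ∀ z, Φ (z + τ) * A = B * Φ z) :
    Φ = 0 := by
  set L : Matrix (Fin m) (Fin n) ℂ →ₗ[ℂ] Matrix (Fin m) (Fin n) ℂ := Lmap A B with hL
  have hAd : IsUnit A.det := (Matrix.isUnit_iff_isUnit_det A).mp hA
  have hAA : A * A⁻¹ = 1 := Matrix.mul_nonsing_inv A hAd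
  have hA'A : A⁻¹ * A = 1 := Matrix.nonsing_inv_mul A hAd
  have key : ∀ d : ℕ, ∀ W : Submodule ℂ (Matrix (Fin m) (Fin n) ℂ),
      Module.finrank ℂ W ≤ d → (∀ x ∈ W, L x ∈ W) →
      ∀ F : ℂ → Matrix (Fin m) (Fin n) ℂ,
        (∀ i j, Differentiable ℂ fun z => F z i j) →
        (∀ z, F (z + 1) = F z) → (∀ z, F (z + τ) = L (F z)) →
        (∀ z, F z ∈ W) → ∀ z, F z = 0 := by
    intro d
    induction d with
    | zero =>
        intro W hr _ F _ _ _ hmem z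
        have hW : W = ⊥ := by
          rw [← Submodule.finrank_eq_zero (R := ℂ) (M := Matrix (Fin m) (Fin n) ℂ)]
          omega
        have := hmem z
        rw [hW, Submodule.mem_bot] at this
        exact this
    | succ d ih =>
        intro W hr hinv F hFd hF1 hFτ hmem
        rcases Nat.eq_zero_or_pos (Module.finrank ℂ W) with h0 | hpos
        · intro z
          have hW : W = ⊥ := by rw [← Submodule.finrank_eq_zero (R := ℂ) (M := Matrix (Fin m) (Fin n) ℂ)]; omega
          have := hmem z
          rwa [hW, Submodule.mem_bot] at this
        · have : Nontrivial W := Module.finrank_pos_iff.mp hpos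
          obtain ⟨γ, hγev⟩ := Module.End.exists_eigenvalue (LinearMap.restrict L hinv)
          obtain ⟨x, hx⟩ := hγev.exists_hasEigenvector
          have hxV : L (x : Matrix (Fin m) (Fin n) ℂ) = γ • (x : Matrix (Fin m) (Fin n) ℂ) := by
            have h := congrArg (Subtype.val) hx.apply_eq_smul
            simpa [LinearMap.restrict_apply] using h
          set g : Matrix (Fin m) (Fin n) ℂ →ₗ[ℂ] Matrix (Fin m) (Fin n) ℂ := L - γ • LinearMap.id with hgdef
          set W' : Submodule ℂ (Matrix (Fin m) (Fin n) ℂ) := W.map g with hW'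
          have hW'le : W' ≤ W := by
            rintro _ ⟨y, hy, rfl⟩
            have : g y = L y - γ • y := by simp [hgdef]
            rw [this]
            exact W.sub_mem (hinv y hy) (W.smul_mem γ hy)
          have hW'inv : ∀ v ∈ W', L v ∈ W' := by
            rintro _ ⟨y, hy, rfl⟩
            refine ⟨L y, hinv y hy, ?_⟩
            simp [hgdef, _root_.map_smul]
          have hlt : Module.finrank ℂ W' < Module.finrank ℂ W := by
            set φ : W →ₗ[ℂ] Matrix (Fin m) (Fin n) ℂ := g.comp W.subtype with hφ
            have hrange : LinearMap.range φ = W' := by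
              rw [hφ, LinearMap.range_comp, Submodule.range_subtype, hW']
            have hker : x ∈ LinearMap.ker φ := by
              simp [hφ, hgdef, hxV]
            have hkpos : 0 < Module.finrank ℂ (LinearMap.ker φ) := by
              apply (Module.finrank_pos_iff (R := ℂ) (M := LinearMap.ker φ)).mpr
              exact nontrivial_of_ne ⟨x, hker⟩ 0 (by
                simp only [ne_eq, Submodule.mk_eq_zero]
                exact hx.right)
            have hrn := LinearMap.finrank_range_add_finrank_ker φ
            rw [hrange] at hrn
            omega
          set G : ℂ → Matrix (Fin m) (Fin n) ℂ := fun z => F (z + τ) - γ • F z with hG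
          have hGd : ∀ i j, Differentiable ℂ fun z => G z i j := by
            intro i j
            have hshift : Differentiable ℂ fun z => F (z + τ) i j :=
              (hFd i j).comp (differentiable_id.add_const τ)
            have : (fun z => G z i j) = fun z => F (z + τ) i j - γ * F z i j := by
              funext z
              simp [hG, Matrix.sub_apply, Matrix.smul_apply, smul_eq_mul]
            rw [this]
            exact hshift.sub ((hFd i j).const_mul γ)
          have hG1 : ∀ z, G (z + 1) = G z := by
            intro z
            have e1 : z + 1 + τ = z + τ + 1 := by ring
            simp only [hG, e1, hF1]
          have hGτ : ∀ z, G (z + τ) = L (G z) := by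
            intro z
            simp only [hG, hFτ (z + τ), hFτ z, map_sub, _root_.map_smul]
          have hGmem : ∀ z, G z ∈ W' := by
            intro z
            refine ⟨F z, hmem z, ?_⟩
            simp only [hgdef, hG, LinearMap.sub_apply, LinearMap.smul_apply, LinearMap.id_apply,
              hFτ z]
          have hG0 : ∀ z, G z = 0 := ih W' (by omega) hW'inv G hGd hG1 hGτ hGmem
          have hstep : ∀ z, F (z + τ) = γ • F z := by
            intro z
            have := hG0 z
            rw [hG] at this
            exact sub_eq_zero.mp this
          -- spectral condition on γ
          have hBx : B * (x : Matrix (Fin m) (Fin n) ℂ) = γ • ((x : Matrix (Fin m) (Fin n) ℂ) * A) := by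
            have h := congrArg (fun M : Matrix (Fin m) (Fin n) ℂ => M * A) hxV
            rw [show L (x : Matrix (Fin m) (Fin n) ℂ)
              = B * (x : Matrix (Fin m) (Fin n) ℂ) * A⁻¹ from rfl] at h
            rw [Matrix.mul_assoc, hA'A, Matrix.mul_one, Matrix.smul_mul] at h
            exact h
          obtain ⟨α, hα, β, hβ, hβα⟩ := specK hB (fun hh => hx.right (ZeroMemClass.coe_eq_zero.mp hh)) hBx
          have hγint : ∀ k : ℤ, γ ≠ Complex.exp (2 * πc * I * (k : ℂ) * τ) := by
            intro k hk
            have hexp : Complex.exp (2 * πc * I * ((k : ℂ)) * τ) *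
                Complex.exp (2 * πc * I * ((- k : ℤ) : ℂ) * τ) = 1 := by
              rw [← Complex.exp_add, ← Complex.exp_zero]
              congr 1
              push_cast
              ring
            exact hspec α hα β hβ (-k) (by rw [hβα, hk]; linear_combination (-α) * hexp)
          intro z
          ext i j
          have := scalar_vanish hτ hγint (hFd i j) (fun w => by rw [hF1 w])
            (fun w => by rw [hstep w]; simp [Matrix.smul_apply, smul_eq_mul]) z
          simpa using this
  have hFτ : ∀ z, Φ (z + τ) = L (Φ z) := by
    intro z
    have h := congrArg (fun M => M * A⁻¹) (hqp z)
    rw [Matrix.mul_assoc, hAA, Matrix.mul_one] at h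
    exact h
  funext z
  simp only [Pi.zero_apply]
  exact key (Module.finrank ℂ (Matrix (Fin m) (Fin n) ℂ)) ⊤ (Submodule.finrank_le ⊤)
    (fun x _ => Submodule.mem_top) Φ hdiff hper hFτ (fun z => Submodule.mem_top) z

end
end

section
/- Let τ ∈ ℂ with Im τ > 0 and φ(z) = exp(−πiτ − 2πiz). Then the complex vector space V = {f : ℂ → ℂ holomorphic : f(z+1) = f(z) and f(z+τ) = φ(z)·f(z) for all z ∈ ℂ} is one-dimensional and is spanned by the third Jacobi theta function θ̄(z) = Σ_{n∈ℤ} exp(πin²τ + 2πinz); i.e. θ̄ ∈ V, θ̄ ≠ 0, and every f ∈ V is a complex scalar multiple of θ̄. -/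
open Complex Matrix
open scoped TensorProduct

noncomputable section

/-- First Jacobi theta function θ₁(z|τ) = 2q^{1/4} Σ_{m≥0} (−1)^m q^{m(m+1)} sin((2m+1)πz),
with q = exp(πiτ). -/
def theta1 (τ z : ℂ) : ℂ :=
  2 * Complex.exp (πc * I * τ / 4) *
    ∑' m : ℕ, (-1 : ℂ) ^ m * Complex.exp (πc * I * τ * (m * (m + 1))) *
      Complex.sin ((2 * (m : ℂ) + 1) * πc * z)

/-- Third Jacobi theta function θ₃(z|τ) = Σ_{m∈ℤ} exp(πim²τ + 2πimz). -/
def theta3 (τ z : ℂ) : ℂ :=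
  ∑' m : ℤ, Complex.exp (πc * I * (m : ℂ) ^ 2 * τ + 2 * πc * I * (m : ℂ) * z)

/-- The Kronecker function σ(u,x) = θ'(0)θ(u+x)/(θ(u)θ(x)). -/
def kron (τ u x : ℂ) : ℂ :=
  deriv (theta1 τ) 0 * theta1 τ (u + x) / (theta1 τ u * theta1 τ x)

/-- The space of holomorphic functions f with f(z+1) = f(z) and f(z+τ) = φ(z)·f(z). -/
def Vsp (τ : ℂ) (φ : ℂ → ℂ) : Submodule ℂ (ℂ → ℂ) where
  carrier := {f | Differentiable ℂ f ∧ (∀ z, f (z + 1) = f z) ∧ ∀ z, f (z + τ) = φ z * f z}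
  add_mem' := by
    rintro f g ⟨hd, hp, hq⟩ ⟨gd, gp, gq⟩
    refine ⟨hd.add gd, fun z => ?_, fun z => ?_⟩
    · show f (z + 1) + g (z + 1) = f z + g z
      rw [hp, gp]
    · show f (z + τ) + g (z + τ) = φ z * (f z + g z)
      rw [hq, gq, mul_add]
  zero_mem' := ⟨differentiable_const 0, fun z => rfl, fun z => by simp⟩
  smul_mem' := by
    rintro a f ⟨hd, hp, hq⟩
    refine ⟨hd.const_smul a, fun z => ?_, fun z => ?_⟩
    · show a • f (z + 1) = a • f z
      rw [hp]
    · show a • f (z + τ) = φ z * (a • f z)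
      rw [hq, smul_eq_mul, smul_eq_mul, mul_left_comm]


section ThetaAuxiliary

open MeasureTheory intervalIntegral

lemma integral_vert_shift {g : ℂ → ℂ} (hg : Differentiable ℂ g)
    (hp : ∀ z, g (z + 1) = g z) (y : ℝ) :
    (∫ t : ℝ in (0:ℝ)..1, g (t + y * I)) = ∫ t : ℝ in (0:ℝ)..1, g t := by
  have H := Complex.integral_boundary_rect_eq_zero_of_differentiableOn g 0 (1 + y * I)
    hg.differentiableOn
  have e1 : ((1 : ℂ) + y * I).re = 1 := by simp
  have e2 : ((1 : ℂ) + y * I).im = y := by simp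
  rw [Complex.zero_re, Complex.zero_im, e1, e2] at H
  have hv : ∀ s : ℝ, g (((1:ℝ):ℂ) + s * I) = g (((0:ℝ):ℂ) + s * I) := by
    intro s
    rw [Complex.ofReal_zero, Complex.ofReal_one, zero_add, add_comm]
    exact hp _
  simp only [hv] at H
  have e3 : ∀ x : ℝ, (x : ℂ) + ((0:ℝ):ℂ) * I = x := by intro x; simp
  simp only [e3] at H
  have e4 : ∀ x : ℝ, (x : ℂ) + ((y:ℝ):ℂ) * I = x + y * I := by intro x; simp
  simp only [e4, smul_eq_mul] at H
  linear_combination -H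

lemma integral_shift {g : ℂ → ℂ} (hg : Differentiable ℂ g)
    (hp : ∀ z, g (z + 1) = g z) (w : ℂ) :
    (∫ t : ℝ in (0:ℝ)..1, g (t + w)) = ∫ t : ℝ in (0:ℝ)..1, g t := by
  have h1 : (∫ t : ℝ in (0:ℝ)..1, g (t + w)) = ∫ t : ℝ in (0:ℝ)..1, g (t + w.re) := by
    have hv := integral_vert_shift (g := fun z => g (z + w.re))
      (hg.comp ((differentiable_id).add_const _))
      (fun z => by beta_reduce; rw [add_right_comm]; exact hp _) w.im
    rw [← hv]
    refine intervalIntegral.integral_congr fun t ht => ?_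
    congr 1
    linear_combination - Complex.re_add_im w
  have hper : Function.Periodic (fun t : ℝ => g t) 1 := by
    intro t
    have := hp t
    push_cast
    simpa using this
  have h2 : (∫ t : ℝ in (0:ℝ)..1, g (t + w.re)) = ∫ t : ℝ in (0:ℝ)..1, g t := by
    have e : (∫ t : ℝ in (0:ℝ)..1, g (t + w.re)) = ∫ t : ℝ in (0+w.re)..(1+w.re), g t := by
      rw [← intervalIntegral.integral_comp_add_right (fun t : ℝ => g t) w.re]
      refine intervalIntegral.integral_congr fun t ht => ?_
      push_cast
      ring_nf
    rw [e, zero_add, add_comm (1:ℝ) w.re]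
    have := hper.intervalIntegral_add_eq (0 + w.re) 0
    simpa using this
  rw [h1, h2]

/-- The `n`-th Fourier coefficient of a 1-periodic function, as an integral over `[0,1]`. -/
def fcoeff (n : ℤ) (f : ℂ → ℂ) : ℂ :=
  ∫ t : ℝ in (0:ℝ)..1, Complex.exp (-2 * πc * I * n * t) * f t

lemma exp_neg_two_pi_int (n : ℤ) : Complex.exp (-2 * πc * I * n) = 1 := by
  rw [show (-2 * πc * I * n : ℂ) = (-n : ℤ) * (2 * ↑Real.pi * I) by push_cast [πc]; ring]
  exact Complex.exp_int_mul_two_pi_mul_I _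

lemma fcoeff_shift {f : ℂ → ℂ} (hd : Differentiable ℂ f) (hp : ∀ z, f (z + 1) = f z)
    (n : ℤ) (w : ℂ) :
    fcoeff n (fun z => f (z + w)) = Complex.exp (2 * πc * I * n * w) * fcoeff n f := by
  set g : ℂ → ℂ := fun z => Complex.exp (-2 * πc * I * n * z) * f z with hg
  have hgd : Differentiable ℂ g := (differentiable_const _ |>.mul differentiable_id).cexp.mul hd
  have hgp : ∀ z, g (z + 1) = g z := by
    intro z
    simp only [hg]
    rw [hp, mul_add, Complex.exp_add, mul_one, exp_neg_two_pi_int, mul_one]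
  have key := integral_shift hgd hgp w
  have lhs_eq : fcoeff n (fun z => f (z + w)) =
      Complex.exp (2 * πc * I * n * w) * ∫ t : ℝ in (0:ℝ)..1, g (t + w) := by
    rw [← intervalIntegral.integral_const_mul]
    refine intervalIntegral.integral_congr fun t _ => ?_
    simp only [hg]
    rw [← mul_assoc, ← Complex.exp_add]
    congr 2
    ring
  rw [lhs_eq, key]
  rfl

lemma fcoeff_eq {τ : ℂ} {f : ℂ → ℂ}
    (hd : Differentiable ℂ f) (hp : ∀ z, f (z + 1) = f z)
    (hq : ∀ z, f (z + τ) = Complex.exp (-πc * I * τ - 2 * πc * I * z) * f z) (n : ℤ) :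
    fcoeff n f = Complex.exp (πc * I * n ^ 2 * τ) * fcoeff 0 f := by
  have step : ∀ m : ℤ, fcoeff (m + 1) f =
      Complex.exp (πc * I * (2 * (m:ℂ) + 1) * τ) * fcoeff m f := by
    intro m
    have h1 := fcoeff_shift hd hp m τ
    have h2 : fcoeff m (fun z => f (z + τ)) =
        Complex.exp (-πc * I * τ) * fcoeff (m + 1) f := by
      unfold fcoeff
      rw [← intervalIntegral.integral_const_mul]
      refine intervalIntegral.integral_congr fun t _ => ?_
      beta_reduce
      rw [hq, ← mul_assoc, ← Complex.exp_add, ← mul_assoc, ← Complex.exp_add]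
      congr 2
      push_cast
      ring
    rw [h2] at h1
    apply mul_left_cancel₀ (Complex.exp_ne_zero (-πc * I * τ))
    rw [h1, ← mul_assoc, ← Complex.exp_add]
    congr 2
    ring
  induction n using Int.induction_on with
  | zero => simp
  | succ k ih =>
      rw [step k, ih, ← mul_assoc, ← Complex.exp_add]
      congr 2
      push_cast
      ring
  | pred k ih =>
      have hstep := step (-(k:ℤ) - 1)
      rw [show (-(k:ℤ) - 1 + 1) = -(k:ℤ) by ring] at hstep
      have h5 : fcoeff (-(k:ℤ) - 1) f =
          Complex.exp (-(πc * I * (2 * ((-(k:ℤ) - 1 : ℤ) : ℂ) + 1) * τ)) * fcoeff (-(k:ℤ)) f := by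
        rw [hstep, ← mul_assoc, ← Complex.exp_add, neg_add_cancel, Complex.exp_zero, one_mul]
      rw [h5, ih, ← mul_assoc, ← Complex.exp_add]
      congr 2
      push_cast
      ring

lemma eq_zero_at_zero_of_fcoeff {f : ℂ → ℂ} (hd : Differentiable ℂ f)
    (hp : ∀ z, f (z + 1) = f z) (hc : ∀ n : ℤ, fcoeff n f = 0) : f 0 = 0 := by
  haveI : Fact (0 < (1:ℝ)) := ⟨one_pos⟩
  set F : ℝ → ℂ := fun t => f t with hF
  have hFc : Continuous F := hd.continuous.comp Complex.continuous_ofReal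
  have hF01 : F 0 = F 1 := by
    simp only [hF, Complex.ofReal_zero, Complex.ofReal_one]
    rw [show (1:ℂ) = 0 + 1 by ring, hp]
  set G : C(AddCircle (1:ℝ), ℂ) :=
    ⟨AddCircle.liftIco 1 0 F, AddCircle.liftIco_zero_continuous hF01 hFc.continuousOn⟩ with hG
  have hGcoeff : ∀ n : ℤ, fourierCoeff (G : AddCircle (1:ℝ) → ℂ) n = 0 := by
    intro n
    have h1 : fourierCoeff (G : AddCircle (1:ℝ) → ℂ) n = fourierCoeffOn
        (lt_add_of_pos_right (0:ℝ) one_pos) F n := fourierCoeff_liftIco_eq F n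
    have h2 : (∫ x : ℝ in (0:ℝ)..(0+1), fourier (-n) (x : AddCircle (0+1-0:ℝ)) • F x)
        = fcoeff n f := by
      rw [show ((0:ℝ)+1) = 1 by norm_num]
      refine intervalIntegral.integral_congr fun t _ => ?_
      rw [fourier_coe_apply, smul_eq_mul]
      congr 2
      push_cast [πc]
      ring
    rw [h1, fourierCoeffOn_eq_integral, h2, hc n, smul_zero]
  have hsum : Summable (fourierCoeff (G : AddCircle (1:ℝ) → ℂ)) :=
    summable_zero.congr fun n => (hGcoeff n).symm
  have hs := hasSum_fourier_series_of_summable hsum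
  have hz : (fun i : ℤ => fourierCoeff (G : AddCircle (1:ℝ) → ℂ) i • fourier i)
      = fun _ : ℤ => (0 : C(AddCircle (1:ℝ), ℂ)) :=
    funext fun i => by rw [hGcoeff i, zero_smul]
  rw [hz] at hs
  have hG0 : G = 0 := (hasSum_zero.unique hs).symm
  have : F 0 = 0 := by
    have h3 : AddCircle.liftIco (1:ℝ) 0 F ((0:ℝ) : AddCircle (1:ℝ)) = F 0 :=
      AddCircle.liftIco_coe_apply (by norm_num)
    rw [← h3]
    have := congrArg (fun u : C(AddCircle (1:ℝ), ℂ) => u ((0:ℝ) : AddCircle (1:ℝ))) hG0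
    simpa [hG] using this
  simpa [hF] using this

lemma theta3_eq_jacobi (τ z : ℂ) : theta3 τ z = jacobiTheta₂ z τ := by
  unfold theta3 jacobiTheta₂
  refine tsum_congr fun n => ?_
  rw [jacobiTheta₂_term]
  congr 1
  push_cast [πc]
  ring

set_option linter.unusedTactic false in
lemma fcoeff_zero_theta3 {τ : ℂ} (hτ : 0 < τ.im) : fcoeff 0 (theta3 τ) = 1 := by
  have h0 : fcoeff 0 (theta3 τ) = ∫ t : ℝ in (0:ℝ)..1, jacobiTheta₂ (t : ℂ) τ := by
    unfold fcoeff
    refine intervalIntegral.integral_congr fun t _ => ?_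
    rw [theta3_eq_jacobi]
    norm_num
  rw [h0, intervalIntegral.integral_of_le zero_le_one]
  unfold jacobiTheta₂
  have hsum : Summable (fun m : ℤ => Real.exp (-Real.pi * m ^ 2 * τ.im)) := by
    have h1 := summable_norm_iff.mpr ((summable_jacobiTheta₂_term_iff 0 τ).mpr hτ)
    refine h1.congr fun m => ?_
    rw [norm_jacobiTheta₂_term]
    norm_num
  rw [MeasureTheory.integral_tsum]
  · have hint : ∀ m : ℤ, (∫ t in Set.Ioc (0:ℝ) 1, jacobiTheta₂_term m (t:ℂ) τ)
        = if m = 0 then 1 else 0 := by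
      intro m
      rw [← intervalIntegral.integral_of_le zero_le_one]
      have he : ∀ t : ℝ, jacobiTheta₂_term m (t:ℂ) τ
          = Complex.exp ((Real.pi : ℂ) * I * m ^ 2 * τ) *
            Complex.exp ((2 * Real.pi * I * m) * t) := by
        intro t
        rw [jacobiTheta₂_term, Complex.exp_add]
        ring_nf
      simp_rw [he]
      rw [intervalIntegral.integral_const_mul]
      by_cases hm : m = 0
      · subst hm
        simp
      · rw [if_neg hm, integral_exp_mul_complex]
        · have : Complex.exp (2 * (Real.pi:ℂ) * I * m * 1) = 1 := by
            rw [show (2 * (Real.pi:ℂ) * I * m * 1) = (m : ℤ) * (2 * Real.pi * I) by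
              push_cast; ring]
            exact Complex.exp_int_mul_two_pi_mul_I _
          push_cast
          rw [this, mul_zero, Complex.exp_zero]
          norm_num
        · simp [Real.pi_ne_zero, Complex.ext_iff, hm]
    simp_rw [hint]
    rw [tsum_ite_eq]
  · intro m
    exact (Continuous.aestronglyMeasurable (by
      have : Continuous fun t : ℝ => jacobiTheta₂_term m (t:ℂ) τ := by
        unfold jacobiTheta₂_term
        fun_prop
      exact this))
  · have hb : ∀ m : ℤ, (∫⁻ t in Set.Ioc (0:ℝ) 1, ‖jacobiTheta₂_term m (t:ℂ) τ‖₊)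
        = ENNReal.ofReal (Real.exp (-Real.pi * m ^ 2 * τ.im)) := by
      intro m
      have : ∀ t : ℝ, (‖jacobiTheta₂_term m (t:ℂ) τ‖₊ : ENNReal)
          = ENNReal.ofReal (Real.exp (-Real.pi * m ^ 2 * τ.im)) := by
        intro t
        rw [← enorm_eq_nnnorm, ← ofReal_norm, norm_jacobiTheta₂_term]
        norm_num
      simp_rw [this]
      rw [MeasureTheory.setLIntegral_const, Real.volume_Ioc]
      norm_num
    simp_rw [enorm_eq_nnnorm, hb]
    rw [← ENNReal.ofReal_tsum_of_nonneg (fun m => (Real.exp_pos _).le) hsum]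
    exact ENNReal.ofReal_ne_top

end ThetaAuxiliary

/-- The space of holomorphic functions with f(z+1) = f(z), f(z+τ) = exp(−πiτ−2πiz)f(z) is
one-dimensional, spanned by the third Jacobi theta function. -/
theorem theta3_spans (τ : ℂ) (hτ : 0 < τ.im) :
    theta3 τ ∈ Vsp τ (fun z => Complex.exp (-πc * I * τ - 2 * πc * I * z)) ∧
    theta3 τ ≠ 0 ∧
    ∀ f ∈ Vsp τ (fun z => Complex.exp (-πc * I * τ - 2 * πc * I * z)),
      ∃ c : ℂ, f = c • theta3 τ := by
  have hφ : ∀ z : ℂ, Complex.exp (-(Real.pi:ℂ) * I * (τ + 2 * z)) =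
      Complex.exp (-πc * I * τ - 2 * πc * I * z) := by
    intro z
    congr 1
    push_cast [πc]
    ring
  have hθd : Differentiable ℂ (theta3 τ) := by
    have : theta3 τ = fun z => jacobiTheta₂ z τ := funext fun z => theta3_eq_jacobi τ z
    rw [this]
    exact fun z => differentiableAt_jacobiTheta₂_fst z hτ
  have hθp : ∀ z, theta3 τ (z + 1) = theta3 τ z := by
    intro z
    rw [theta3_eq_jacobi, theta3_eq_jacobi, jacobiTheta₂_add_left]
  have hθq : ∀ z, theta3 τ (z + τ) =
      Complex.exp (-πc * I * τ - 2 * πc * I * z) * theta3 τ z := by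
    intro z
    rw [theta3_eq_jacobi, theta3_eq_jacobi, jacobiTheta₂_add_left', hφ]
  have hmem : theta3 τ ∈ Vsp τ (fun z => Complex.exp (-πc * I * τ - 2 * πc * I * z)) :=
    ⟨hθd, hθp, hθq⟩
  refine ⟨hmem, ?_, ?_⟩
  · intro h0
    have h1 := fcoeff_zero_theta3 hτ
    rw [h0] at h1
    simp only [fcoeff, Pi.zero_apply, mul_zero, intervalIntegral.integral_zero] at h1
    exact one_ne_zero h1.symm
  · rintro f ⟨hd, hp, hq⟩
    refine ⟨fcoeff 0 f, ?_⟩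
    set c : ℂ := fcoeff 0 f with hc
    set h : ℂ → ℂ := fun z => f z - c * theta3 τ z with hh
    have hhd : Differentiable ℂ h := hd.sub (hθd.const_mul c)
    have hhp : ∀ z, h (z + 1) = h z := by
      intro z
      simp only [hh]
      rw [hp, hθp]
    have hhq : ∀ z, h (z + τ) = Complex.exp (-πc * I * τ - 2 * πc * I * z) * h z := by
      intro z
      simp only [hh]
      rw [hq, hθq]
      ring
    have hhc : ∀ n : ℤ, fcoeff n h = 0 := by
      intro n
      have hsplit : fcoeff n h = fcoeff n f - c * fcoeff n (theta3 τ) := by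
        simp only [fcoeff, hh]
        rw [← intervalIntegral.integral_const_mul, ← intervalIntegral.integral_sub]
        · refine intervalIntegral.integral_congr fun t _ => ?_
          ring
        · exact (Continuous.intervalIntegrable (by have := hd.continuous; fun_prop) _ _)
        · refine Continuous.intervalIntegrable ?_ _ _
          have : Continuous fun t : ℝ => theta3 τ (t : ℂ) :=
            hθd.continuous.comp Complex.continuous_ofReal
          fun_prop
      rw [hsplit, fcoeff_eq hd hp hq n, fcoeff_eq hθd hθp hθq n, fcoeff_zero_theta3 hτ,
        mul_one, ← hc]
      ring
    funext z
    have hzd : Differentiable ℂ (fun u => h (u + z)) :=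
      hhd.comp ((differentiable_id).add_const z)
    have hzp : ∀ u, (fun u => h (u + z)) (u + 1) = (fun u => h (u + z)) u := by
      intro u
      beta_reduce
      rw [add_right_comm]
      exact hhp _
    have hzc : ∀ n : ℤ, fcoeff n (fun u => h (u + z)) = 0 := by
      intro n
      rw [fcoeff_shift hhd hhp n z, hhc n, mul_zero]
    have h0 := eq_zero_at_zero_of_fcoeff hzd hzp hzc
    have : h z = 0 := by simpa using h0
    have hfz : f z = c * theta3 τ z := by
      have := sub_eq_zero.mp this
      exact this
    rw [hfz]
    simp [smul_eq_mul]
end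
end

section
/- Let n ≥ 1 and let N ∈ Mat_{n²×n²}(ℂ) be the block matrix built from the blocks A₀, …, A_{n−1} as in the definition below. Then N is nilpotent; more precisely N^{2n−1} = 0. -/
open Complex Matrix
open scoped TensorProduct

noncomputable section

/-- The blocks of the matrix N: A₀ is the strictly lower-triangular Toeplitz matrix with
entries a_{i−j} = (−1)^{i−j}/(i−j) below the diagonal, and A_k = −a_k·Id for k ≥ 1. -/
def Ablock (n : ℕ) (k : ℕ) : Matrix (Fin n) (Fin n) ℂ :=
  if k = 0 then
    Matrix.of fun i j : Fin n =>
      if (j : ℕ) < (i : ℕ) then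
        (-1 : ℂ) ^ ((i : ℕ) - (j : ℕ)) / ((((i : ℕ) - (j : ℕ) : ℕ)) : ℂ)
      else 0
  else (-((-1 : ℂ) ^ k / (k : ℂ))) • (1 : Matrix (Fin n) (Fin n) ℂ)

/-- The n²×n² block upper-triangular block-Toeplitz matrix N whose (p,q)-block equals
A_{q−p} for q ≥ p and 0 otherwise; rows and columns are indexed by pairs
(block index, index inside the block). -/
def Nmat (n : ℕ) : Matrix (Fin n × Fin n) (Fin n × Fin n) ℂ :=
  Matrix.of fun pi qj : Fin n × Fin n =>
    if (pi.1 : ℕ) ≤ (qj.1 : ℕ) then Ablock n ((qj.1 : ℕ) - (pi.1 : ℕ)) pi.2 qj.2 else 0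

lemma pow_entry_aux {ι : Type*} [Fintype ι] [DecidableEq ι] (M : Matrix ι ι ℂ) (f : ι → ℕ)
    (h : ∀ x y, M x y ≠ 0 → f x < f y) :
    ∀ m x y, (M ^ m) x y ≠ 0 → f x + m ≤ f y := by
  intro m
  induction m with
  | zero =>
      intro x y hxy
      rw [pow_zero] at hxy
      by_cases hx : x = y
      · subst hx; omega
      · exact absurd (Matrix.one_apply_ne hx) hxy
  | succ m ih =>
      intro x y hxy
      rw [pow_succ, Matrix.mul_apply] at hxy
      obtain ⟨z, _, hz⟩ := Finset.exists_ne_zero_of_sum_ne_zero hxy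
      have h1 := ih x z (left_ne_zero_of_mul hz)
      have h2 := h z y (right_ne_zero_of_mul hz)
      omega

/-- The matrix N is nilpotent: N^{2n−1} = 0. -/
theorem Nmat_nilpotent (n : ℕ) (hn : 1 ≤ n) : Nmat n ^ (2 * n - 1) = 0 := by
  have key : ∀ x y : Fin n × Fin n, Nmat n x y ≠ 0 →
      ((x.1 : ℕ) + (n - 1 - (x.2 : ℕ))) < ((y.1 : ℕ) + (n - 1 - (y.2 : ℕ))) := by
    rintro ⟨p, i⟩ ⟨q, j⟩ hne
    show (p : ℕ) + (n - 1 - (i : ℕ)) < (q : ℕ) + (n - 1 - (j : ℕ))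
    have hi : (i : ℕ) < n := i.2
    have hj : (j : ℕ) < n := j.2
    simp only [Nmat, Matrix.of_apply] at hne
    by_cases hpq : (p : ℕ) ≤ (q : ℕ)
    · rw [if_pos hpq] at hne
      by_cases hk : (q : ℕ) - (p : ℕ) = 0
      · rw [hk] at hne
        have hqp : (q : ℕ) = (p : ℕ) := by omega
        simp only [Ablock] at hne
        rw [if_pos trivial] at hne
        simp only [Matrix.of_apply] at hne
        by_cases hji : (j : ℕ) < (i : ℕ)
        · omega
        · rw [if_neg hji] at hne; exact absurd rfl hne
      · simp only [Ablock, if_neg hk, Matrix.smul_apply, Matrix.one_apply] at hne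
        by_cases hij : i = j
        · have : (i : ℕ) = (j : ℕ) := by rw [hij]
          omega
        · rw [if_neg hij, smul_zero] at hne; exact absurd rfl hne
    · rw [if_neg hpq] at hne; exact absurd rfl hne
  ext x y
  rw [Matrix.zero_apply]
  by_contra hxy
  have h1 := pow_entry_aux (Nmat n) (fun x => (x.1 : ℕ) + (n - 1 - (x.2 : ℕ)))
    key (2 * n - 1) x y hxy
  have hx1 : (x.1 : ℕ) < n := x.1.2
  have hy1 : (y.1 : ℕ) < n := y.1.2
  omega
end
end

section
/- Let n ≥ 1 and let J = J_n(1) ∈ GL_n(ℂ) be the Jordan block of size n with eigenvalue 1. For matrices C ∈ Mat_{n×n}(ℂ) and D ∈ GL_n(ℂ), let C ⊗ D̃ denote the n²×n² block matrix whose (i,j)-block is c_{ij}·(D⁻¹)ᵗ. Then J ⊗ J̃ = exp(N), where N ∈ Mat_{n²×n²}(ℂ) is the matrix built from the blocks A₀, …, A_{n−1} as in the definition below and exp is the matrix exponential (a finite sum since N is nilpotent). -/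
open Complex Matrix
open scoped TensorProduct

noncomputable section

/-- The Jordan block J_n(1) (ones on the diagonal and the first superdiagonal). -/
def Jord (n : ℕ) : Matrix (Fin n) (Fin n) ℂ :=
  Matrix.of fun i j : Fin n => if i = j ∨ (j : ℕ) = (i : ℕ) + 1 then 1 else 0

open scoped Kronecker

namespace JordanAux

open PowerSeries

/-- The formal series of log(1+X). -/
def Lser : ℂ⟦X⟧ := PowerSeries.mk fun k => (-1 : ℂ) ^ (k + 1) / (k : ℂ)

lemma coeff_Lser (k : ℕ) : PowerSeries.coeff k Lser = (-1 : ℂ) ^ (k + 1) / (k : ℂ) :=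
  coeff_mk _ _

lemma X_dvd_Lser : (PowerSeries.X : ℂ⟦X⟧) ∣ Lser := by
  rw [PowerSeries.X_dvd_iff, ← coeff_zero_eq_constantCoeff_apply, coeff_Lser]
  norm_num

lemma coeff_Lser_pow {k m : ℕ} (h : k < m) : PowerSeries.coeff k (Lser ^ m) = 0 :=
  PowerSeries.X_pow_dvd_iff.mp (pow_dvd_pow_of_dvd X_dvd_Lser m) k h

/-- Partial sums of the formal exp(log(1+X)). -/
def Pser (j : ℕ) : ℂ⟦X⟧ :=
  ∑ m ∈ Finset.range j, PowerSeries.C (((Nat.factorial m : ℂ))⁻¹) * Lser ^ m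

def Ecoef (k : ℕ) : ℂ := PowerSeries.coeff k (Pser (k + 1))

lemma coeff_Pser {k j : ℕ} (h : k < j) :
    PowerSeries.coeff k (Pser j) = Ecoef k := by
  unfold Ecoef Pser
  rw [map_sum, map_sum]
  refine (Finset.sum_subset (Finset.range_subset_range.mpr h) ?_).symm
  intro m _ hnot
  have hkm : k < m := by
    by_contra hc
    exact hnot (Finset.mem_range.mpr (Nat.lt_succ_of_le (not_lt.mp hc)))
  rw [PowerSeries.coeff_C_mul, coeff_Lser_pow hkm, mul_zero]

lemma dLser_mul : (d⁄dX ℂ Lser) * (1 + PowerSeries.X) = 1 := by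
  have hc : ∀ k, PowerSeries.coeff k (d⁄dX ℂ Lser) = (-1 : ℂ) ^ k := by
    intro k
    rw [PowerSeries.coeff_derivative, coeff_Lser]
    have h1 : ((k : ℂ) + 1) ≠ 0 := by exact_mod_cast Nat.succ_ne_zero k
    push_cast
    rw [div_mul_cancel₀ _ h1]
    ring
  ext k
  rw [mul_add, mul_one, map_add]
  cases k with
  | zero => simp [hc]
  | succ k =>
      rw [PowerSeries.coeff_succ_mul_X, hc, hc, PowerSeries.coeff_one]
      simp [pow_succ]


lemma ode (j : ℕ) : (1 + PowerSeries.X) * d⁄dX ℂ (Pser (j + 1)) = Pser j := by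
  have hD : d⁄dX ℂ (Pser (j + 1))
      = ∑ m ∈ Finset.range j, PowerSeries.C ((Nat.factorial (m+1) : ℂ))⁻¹ *
          ((m + 1 : ℕ) • (Lser ^ m * d⁄dX ℂ Lser)) := by
    unfold Pser
    rw [Finset.sum_range_succ']
    rw [map_add, map_sum]
    have h0 : d⁄dX ℂ (PowerSeries.C ((Nat.factorial 0 : ℂ))⁻¹ * Lser ^ 0) = 0 := by
      simp
    rw [h0, add_zero]
    refine Finset.sum_congr rfl fun m _ => ?_
    rw [Derivation.leibniz, derivative_C, smul_zero, add_zero,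
      Derivation.leibniz_pow]
    congr 1
  rw [hD, Finset.mul_sum]
  unfold Pser
  refine Finset.sum_congr rfl fun m _ => ?_
  have hfac : ((Nat.factorial (m+1) : ℂ))⁻¹ * ((m+1 : ℕ) : ℂ) = ((Nat.factorial m : ℂ))⁻¹ := by
    have h1 : ((m+1 : ℕ) : ℂ) ≠ 0 := by exact_mod_cast Nat.succ_ne_zero m
    have h2 : ((Nat.factorial m : ℂ)) ≠ 0 := by
      exact_mod_cast Nat.factorial_ne_zero m
    rw [Nat.factorial_succ]
    push_cast
    field_simp
  calc (1 + PowerSeries.X) * (PowerSeries.C ((Nat.factorial (m+1) : ℂ))⁻¹ *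
        ((m + 1 : ℕ) • (Lser ^ m * d⁄dX ℂ Lser)))
      = PowerSeries.C ((Nat.factorial (m+1) : ℂ))⁻¹ * ((m+1 : ℕ) : ℂ⟦X⟧) * Lser ^ m *
        ((d⁄dX ℂ Lser) * (1 + PowerSeries.X)) := by
        rw [nsmul_eq_mul]; ring
    _ = PowerSeries.C ((Nat.factorial m : ℂ))⁻¹ * Lser ^ m := by
        rw [dLser_mul, mul_one]
        congr 1
        rw [show ((m+1 : ℕ) : ℂ⟦X⟧) = PowerSeries.C ((m+1 : ℕ) : ℂ) by
          rw [map_natCast], ← _root_.map_mul, hfac]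


lemma Erec (k : ℕ) : ((k : ℂ) + 1) * Ecoef (k + 1) + (k : ℂ) * Ecoef k = Ecoef k := by
  have h := congrArg (PowerSeries.coeff k) (ode (k + 1))
  rw [coeff_Pser (Nat.lt_succ_self k), add_mul, one_mul, map_add,
    PowerSeries.coeff_derivative, coeff_Pser (by omega)] at h
  cases k with
  | zero =>
      rw [PowerSeries.coeff_zero_X_mul] at h
      push_cast at h ⊢
      linear_combination h
  | succ k =>
      rw [PowerSeries.coeff_succ_X_mul, PowerSeries.coeff_derivative,
        coeff_Pser (by omega)] at h
      push_cast at h ⊢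
      linear_combination h

lemma Ecoef_zero : Ecoef 0 = 1 := by
  unfold Ecoef Pser
  simp

lemma Ecoef_one : Ecoef 1 = 1 := by
  have h := Erec 0
  rw [Ecoef_zero] at h
  push_cast at h
  linear_combination h

lemma Ecoef_two_add (k : ℕ) : Ecoef (k + 2) = 0 := by
  induction k with
  | zero =>
      have h := Erec 1
      rw [Ecoef_one] at h
      have : ((1 : ℂ) + 1) * Ecoef 2 = 0 := by push_cast at h; linear_combination h
      have h2 : ((1 : ℂ) + 1) ≠ 0 := by norm_num
      exact (mul_eq_zero.mp this).resolve_left h2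
  | succ k ih =>
      have h := Erec (k + 2)
      rw [ih] at h
      have hne : ((k + 2 : ℕ) : ℂ) + 1 ≠ 0 := by
        exact_mod_cast Nat.succ_ne_zero (k + 2)
      have : ((k + 2 : ℕ) : ℂ) + 1 ≠ 0 := hne
      have h0 : (((k : ℂ) + 2) + 1) * Ecoef (k + 3) = 0 := by
        push_cast at h; linear_combination h
      have h2 : ((k : ℂ) + 2) + 1 ≠ 0 := by
        have : ((k : ℂ) + 2) + 1 = ((k + 3 : ℕ) : ℂ) := by push_cast; ring
        rw [this]
        exact_mod_cast Nat.succ_ne_zero (k + 2)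
      have := (mul_eq_zero.mp h0).resolve_left h2
      simpa using this


section Eval
variable {A : Type*} [Ring A] [Algebra ℂ A]

/-- Evaluation of a truncated power series at an element. -/
def evalPS (s : A) (N : ℕ) (f : ℂ⟦X⟧) : A :=
  Polynomial.aeval s (PowerSeries.trunc N f)

lemma evalPS_apply (s : A) (N : ℕ) (f : ℂ⟦X⟧) :
    evalPS s N f = ∑ k ∈ Finset.range N, PowerSeries.coeff k f • s ^ k := by
  unfold evalPS
  rw [PowerSeries.trunc_apply]
  rw [map_sum, Finset.range_eq_Ico]
  exact Finset.sum_congr rfl fun k _ => by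
    rw [Polynomial.aeval_monomial, Algebra.smul_def]

lemma evalPS_add (s : A) (N : ℕ) (f g : ℂ⟦X⟧) :
    evalPS s N (f + g) = evalPS s N f + evalPS s N g := by
  unfold evalPS; rw [map_add, map_add]

lemma evalPS_mul {s : A} {N : ℕ} (hs : s ^ N = 0) (f g : ℂ⟦X⟧) :
    evalPS s N (f * g) = evalPS s N f * evalPS s N g := by
  unfold evalPS
  rw [← _root_.map_mul]
  have hdvd : (Polynomial.X : Polynomial ℂ) ^ N ∣
      (PowerSeries.trunc N f * PowerSeries.trunc N g - PowerSeries.trunc N (f * g)) := by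
    rw [Polynomial.X_pow_dvd_iff]
    intro d hd
    rw [Polynomial.coeff_sub, sub_eq_zero]
    have h := congrArg (fun p => Polynomial.coeff p d)
      (PowerSeries.trunc_trunc_mul_trunc (n := N) f g)
    rw [PowerSeries.coeff_trunc, PowerSeries.coeff_trunc, if_pos hd, if_pos hd,
      ← Polynomial.coe_mul, Polynomial.coeff_coe] at h
    rw [PowerSeries.coeff_trunc, if_pos hd]
    exact h
  obtain ⟨e, he⟩ := hdvd
  have h2 : PowerSeries.trunc N f * PowerSeries.trunc N g
      = PowerSeries.trunc N (f * g) + Polynomial.X ^ N * e := by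
    rw [← he]; ring
  rw [h2, map_add, _root_.map_mul (Polynomial.aeval s), map_pow, Polynomial.aeval_X, hs, zero_mul, add_zero]

lemma evalPS_one {s : A} {N : ℕ} (hN : 1 ≤ N) : evalPS s N 1 = 1 := by
  obtain ⟨N', rfl⟩ : ∃ N', N = N' + 1 := ⟨N - 1, by omega⟩
  unfold evalPS
  rw [PowerSeries.trunc_one, _root_.map_one]

lemma evalPS_pow {s : A} {N : ℕ} (hN : 1 ≤ N) (hs : s ^ N = 0) (f : ℂ⟦X⟧) (m : ℕ) :
    evalPS s N (f ^ m) = evalPS s N f ^ m := by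
  induction m with
  | zero => simpa using evalPS_one hN
  | succ m ih => rw [pow_succ, pow_succ, evalPS_mul hs, ih]

lemma evalPS_C {s : A} {N : ℕ} (hN : 1 ≤ N) (c : ℂ) :
    evalPS s N (PowerSeries.C c) = algebraMap ℂ A c := by
  obtain ⟨N', rfl⟩ : ∃ N', N = N' + 1 := ⟨N - 1, by omega⟩
  unfold evalPS
  rw [PowerSeries.trunc_C, Polynomial.aeval_C]

lemma evalPS_sum (s : A) (N : ℕ) {ι : Type*} (t : Finset ι) (F : ι → ℂ⟦X⟧) :
    evalPS s N (∑ i ∈ t, F i) = ∑ i ∈ t, evalPS s N (F i) := by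
  classical
  induction t using Finset.induction_on with
  | empty => simp [evalPS]
  | insert _ _ h ih => rw [Finset.sum_insert h, Finset.sum_insert h, evalPS_add, ih]

end Eval

theorem exp_nilp {A : Type*} [Ring A] [Algebra ℂ A] [TopologicalSpace A] [IsTopologicalRing A]
    [T2Space A] (N : ℕ) (hN : 1 ≤ N) (s : A) (hs : s ^ N = 0) :
    NormedSpace.exp (∑ k ∈ Finset.range N, ((-1 : ℂ) ^ (k + 1) / (k : ℂ)) • s ^ k) = 1 + s := by
  have hM : (∑ k ∈ Finset.range N, ((-1 : ℂ) ^ (k + 1) / (k : ℂ)) • s ^ k) = evalPS s N Lser := by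
    rw [evalPS_apply]
    exact Finset.sum_congr rfl fun k _ => by rw [coeff_Lser]
  rw [hM]
  set M := evalPS s N Lser with hMdef
  have hMN : M ^ N = 0 := by
    rw [← evalPS_pow hN hs]
    have ht : PowerSeries.trunc N (Lser ^ N) = 0 := by
      apply Polynomial.ext
      intro d
      rw [PowerSeries.coeff_trunc, Polynomial.coeff_zero]
      split
      · exact coeff_Lser_pow (by omega)
      · rfl
    unfold evalPS
    rw [ht, map_zero]
  simp only [NormedSpace.exp_eq_tsum ℂ]
  rw [tsum_eq_sum (s := Finset.range N) (fun m hm => ?_)]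
  swap
  · have hm' : N ≤ m := le_of_not_gt (fun hc => hm (Finset.mem_range.mpr hc))
    obtain ⟨d, rfl⟩ := Nat.exists_eq_add_of_le hm'
    rw [pow_add, hMN, zero_mul, smul_zero]
  have h1 : ∀ m, ((Nat.factorial m : ℂ))⁻¹ • M ^ m
      = evalPS s N (PowerSeries.C ((Nat.factorial m : ℂ))⁻¹ * Lser ^ m) := by
    intro m
    rw [evalPS_mul hs, evalPS_pow hN hs, evalPS_C hN, Algebra.smul_def]
  calc ∑ m ∈ Finset.range N, ((m.factorial : ℂ))⁻¹ • M ^ m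
      = evalPS s N (Pser N) := by
        rw [Pser, evalPS_sum]
        exact Finset.sum_congr rfl fun m _ => h1 m
    _ = ∑ k ∈ Finset.range N, Ecoef k • s ^ k := by
        rw [evalPS_apply]
        exact Finset.sum_congr rfl fun k hk =>
          by rw [coeff_Pser (Finset.mem_range.mp hk)]
    _ = 1 + s := by
        match N, hN with
        | 1, _ =>
            have hs0 : s = 0 := by simpa using hs
            simp [Ecoef_zero, hs0]
        | (N'' + 2), _ =>
            rw [Finset.sum_range_succ']
            rw [Finset.sum_range_succ']
            have hz : ∀ i ∈ Finset.range N'', Ecoef (i + 1 + 1) • s ^ (i + 1 + 1) = 0 := by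
              intro i _
              rw [show i + 1 + 1 = i + 2 from rfl, Ecoef_two_add, zero_smul]
            rw [Finset.sum_eq_zero hz, zero_add, Ecoef_one, Ecoef_zero, one_smul, one_smul,
              pow_zero, pow_one, add_comm]

/-- The nilpotent shift matrix (ones on the superdiagonal). -/
def Sh (n : ℕ) : Matrix (Fin n) (Fin n) ℂ :=
  Matrix.of fun i j : Fin n => if (j : ℕ) = (i : ℕ) + 1 then 1 else 0

lemma Sh_pow (n k : ℕ) : (Sh n) ^ k
    = Matrix.of (fun i j : Fin n => if (j : ℕ) = (i : ℕ) + k then 1 else 0) := by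
  induction k with
  | zero =>
      ext i j
      simp [Matrix.one_apply, Fin.ext_iff, eq_comm]
  | succ k ih =>
      rw [pow_succ, ih]
      ext i j
      rw [Matrix.mul_apply]
      by_cases hj : (j : ℕ) = (i : ℕ) + (k + 1)
      · have hik : (i : ℕ) + k < n := by omega
        rw [Finset.sum_eq_single (⟨(i : ℕ) + k, hik⟩ : Fin n)]
        · simp only [Matrix.of_apply, Sh, hj]
          norm_num
          omega
        · intro b _ hb
          have : ¬ ((b : ℕ) = (i : ℕ) + k) := fun hc => hb (by
            apply Fin.ext; simpa using hc)
          simp [Sh, this]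
        · intro hmem; exact absurd (Finset.mem_univ _) hmem
      · simp only [Matrix.of_apply]
        rw [if_neg hj]
        apply Finset.sum_eq_zero
        intro b _
        simp only [Matrix.of_apply, Sh]
        split_ifs with h1 h2 <;> first | (exfalso; omega) | ring
        
lemma Sh_pow_self (n : ℕ) : (Sh n) ^ n = 0 := by
  rw [Sh_pow]
  ext i j
  have : ¬ ((j : ℕ) = (i : ℕ) + n) := by have := j.isLt; omega
  simp [this]

lemma Jord_eq (n : ℕ) : Jord n = 1 + Sh n := by
  ext i j
  simp only [Jord, Sh, Matrix.of_apply, Matrix.add_apply, Matrix.one_apply, Fin.ext_iff]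
  split_ifs <;> first | (exfalso; omega) | norm_num

lemma kron_pow {n : ℕ} (A B : Matrix (Fin n) (Fin n) ℂ) (k : ℕ) :
    (A ⊗ₖ B) ^ k = (A ^ k) ⊗ₖ (B ^ k) := by
  induction k with
  | zero => rw [pow_zero, pow_zero, pow_zero, Matrix.one_kronecker_one]
  | succ k ih => rw [pow_succ, pow_succ, pow_succ, ih, Matrix.mul_kronecker_mul]


lemma sum_sh_entry {n : ℕ} (g : ℕ → ℂ) (p q : Fin n) :
    (∑ k ∈ Finset.range n, g k • (Sh n) ^ k) p q
      = if (p : ℕ) ≤ (q : ℕ) then g ((q : ℕ) - (p : ℕ)) else 0 := by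
  have hterm : ∀ k, (g k • (Sh n) ^ k) p q = if (q : ℕ) = (p : ℕ) + k then g k else 0 := by
    intro k
    rw [Matrix.smul_apply, Sh_pow, Matrix.of_apply, smul_eq_mul, mul_ite, mul_one, mul_zero]
  rw [Matrix.sum_apply]
  simp only [hterm]
  by_cases h : (p : ℕ) ≤ (q : ℕ)
  · rw [if_pos h, Finset.sum_eq_single ((q : ℕ) - (p : ℕ))]
    · rw [if_pos (by omega)]
    · intro b _ hb; rw [if_neg (by omega)]
    · intro hmem
      exact absurd (Finset.mem_range.mpr (by have := q.isLt; omega)) hmem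
  · rw [if_neg h]
    apply Finset.sum_eq_zero
    intro k _
    rw [if_neg (by omega)]

lemma neg_pow_div (m : ℕ) : -((-1 : ℂ) ^ (m + 1) / (m : ℂ)) = (-1 : ℂ) ^ m / (m : ℂ) := by
  rw [pow_succ]
  ring

end JordanAux

/-- J ⊗ J̃ = exp(N), where J̃ = (J⁻¹)ᵗ and (C ⊗ D̃)((i,p),(j,q)) = C i j · D̃ p q. -/
theorem Jord_kronecker_exp (n : ℕ) (hn : 1 ≤ n) :
    Jord n ⊗ₖ ((Jord n)⁻¹)ᵀ = NormedSpace.exp (Nmat n) := by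
  classical
  set S := JordanAux.Sh n with hSdef
  set t : Matrix (Fin n × Fin n) (Fin n × Fin n) ℂ := S ⊗ₖ (1 : Matrix (Fin n) (Fin n) ℂ)
    with htdef
  set u : Matrix (Fin n × Fin n) (Fin n × Fin n) ℂ := (1 : Matrix (Fin n) (Fin n) ℂ) ⊗ₖ Sᵀ
    with hudef
  have hSn : S ^ n = 0 := JordanAux.Sh_pow_self n
  have ht : t ^ n = 0 := by
    rw [htdef, JordanAux.kron_pow, hSn, Matrix.zero_kronecker]
  have hu : u ^ n = 0 := by
    rw [hudef, JordanAux.kron_pow, one_pow, ← Matrix.transpose_pow, hSn,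
      Matrix.transpose_zero, Matrix.kronecker_zero]
  set M₁ := ∑ k ∈ Finset.range n, ((-1 : ℂ) ^ (k + 1) / (k : ℂ)) • t ^ k with hM1def
  set M₂ := ∑ k ∈ Finset.range n, ((-1 : ℂ) ^ (k + 1) / (k : ℂ)) • u ^ k with hM2def
  -- entry computations
  have hM1e : ∀ (p i q j : Fin n), M₁ (p, i) (q, j)
      = (if (p : ℕ) ≤ (q : ℕ) then (-1 : ℂ) ^ ((q : ℕ) - (p : ℕ) + 1) / ((((q : ℕ) - (p : ℕ) : ℕ)) : ℂ) else 0)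
        * (if i = j then 1 else 0) := by
    intro p i q j
    rw [hM1def, Matrix.sum_apply, ← JordanAux.sum_sh_entry (fun k => (-1 : ℂ) ^ (k + 1) / (k : ℂ)) p q,
      Matrix.sum_apply, Finset.sum_mul]
    refine Finset.sum_congr rfl fun k _ => ?_
    rw [Matrix.smul_apply, Matrix.smul_apply, htdef, JordanAux.kron_pow, one_pow,
      Matrix.kroneckerMap_apply, Matrix.one_apply, smul_eq_mul, smul_eq_mul]
    ring
  have hM2e : ∀ (p i q j : Fin n), M₂ (p, i) (q, j)
      = (if p = q then 1 else 0)
        * (if (j : ℕ) ≤ (i : ℕ) then (-1 : ℂ) ^ ((i : ℕ) - (j : ℕ) + 1) / ((((i : ℕ) - (j : ℕ) : ℕ)) : ℂ) else 0) := by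
    intro p i q j
    rw [hM2def, Matrix.sum_apply, ← JordanAux.sum_sh_entry (fun k => (-1 : ℂ) ^ (k + 1) / (k : ℂ)) j i,
      Matrix.sum_apply, Finset.mul_sum]
    refine Finset.sum_congr rfl fun k _ => ?_
    rw [Matrix.smul_apply, Matrix.smul_apply, hudef, JordanAux.kron_pow, one_pow,
      Matrix.kroneckerMap_apply, Matrix.one_apply, ← Matrix.transpose_pow,
      Matrix.transpose_apply, smul_eq_mul, smul_eq_mul]
    ring
  have hsplit : Nmat n = M₁ + -M₂ := by
    apply Matrix.ext
    rintro ⟨p, i⟩ ⟨q, j⟩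
    rw [Matrix.add_apply, Matrix.neg_apply, hM1e, hM2e]
    show (Nmat n) (p, i) (q, j) = _
    rw [Nmat, Matrix.of_apply]
    by_cases hpq : (p : ℕ) ≤ (q : ℕ)
    · rw [if_pos hpq, if_pos hpq]
      by_cases hpq2 : p = q
      · have hq : (q : ℕ) - (p : ℕ) = 0 := by rw [hpq2]; omega
        rw [hq, if_pos hpq2, Ablock, if_pos rfl, Matrix.of_apply]
        by_cases hij : (j : ℕ) < (i : ℕ)
        · rw [if_pos hij, if_neg (by omega : ¬ i = j), if_pos (by omega : (j : ℕ) ≤ (i : ℕ))]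
          rw [← JordanAux.neg_pow_div]
          push_cast
          ring
        · rw [if_neg hij]
          by_cases hij2 : i = j
          · have : (i : ℕ) - (j : ℕ) = 0 := by omega
            rw [if_pos hij2, this, if_pos (by omega : (j : ℕ) ≤ (i : ℕ))]
            norm_num
          · rw [if_neg hij2, if_neg (by omega : ¬ (j : ℕ) ≤ (i : ℕ))]
            norm_num
      · have hk : ¬ ((q : ℕ) - (p : ℕ) = 0) := by
          have : (p : ℕ) ≠ (q : ℕ) := fun hc => hpq2 (Fin.ext hc)
          omega
        rw [Ablock, if_neg hk, if_neg hpq2, Matrix.smul_apply, Matrix.one_apply, smul_eq_mul]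
        rw [← JordanAux.neg_pow_div]
        by_cases hij : i = j
        · rw [if_pos hij]; ring
        · rw [if_neg hij]; ring
    · rw [if_neg hpq, if_neg hpq, if_neg (fun hc : p = q => hpq (by rw [hc]))]
      norm_num
  -- commuting
  have htu : Commute t u := by
    show _ * _ = _ * _
    rw [htdef, hudef, ← Matrix.mul_kronecker_mul, ← Matrix.mul_kronecker_mul,
      one_mul, mul_one, one_mul, mul_one]
  have h12 : Commute M₁ M₂ := by
    refine Commute.sum_left _ _ _ fun k _ => ?_
    refine Commute.sum_right _ _ _ fun l _ => ?_
    exact ((htu.pow_pow k l).smul_left _).smul_right _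
  rw [hsplit, Matrix.exp_add_of_commute _ _ h12.neg_right]
  have hexp1 : NormedSpace.exp M₁ = 1 + t := JordanAux.exp_nilp n hn t ht
  have hexp2 : NormedSpace.exp M₂ = 1 + u := JordanAux.exp_nilp n hn u hu
  rw [Matrix.exp_neg M₂, hexp1, hexp2]
  have h1t : (1 : Matrix (Fin n × Fin n) (Fin n × Fin n) ℂ) + t = (Jord n) ⊗ₖ 1 := by
    rw [JordanAux.Jord_eq, Matrix.add_kronecker, Matrix.one_kronecker_one, htdef]
  have h1u : (1 : Matrix (Fin n × Fin n) (Fin n × Fin n) ℂ) + u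
      = (1 : Matrix (Fin n) (Fin n) ℂ) ⊗ₖ (Jord n)ᵀ := by
    rw [JordanAux.Jord_eq, Matrix.transpose_add, Matrix.transpose_one,
      Matrix.kronecker_add, Matrix.one_kronecker_one, hudef]
  have hdet : IsUnit ((Jord n)ᵀ).det := by
    have hbt : (Jord n).BlockTriangular id := by
      intro i j hij
      have hij' : (j : ℕ) < (i : ℕ) := hij
      have hcond : ¬ (i = j ∨ (j : ℕ) = (i : ℕ) + 1) := by
        rintro (rfl | h) <;> omega
      rw [Jord, Matrix.of_apply, if_neg hcond]
    have hdet1 : (Jord n).det = 1 := by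
      rw [Matrix.det_of_upperTriangular hbt]
      refine Finset.prod_eq_one fun i _ => ?_
      rw [Jord, Matrix.of_apply, if_pos (Or.inl rfl)]
    rw [Matrix.det_transpose, hdet1]
    exact isUnit_one
  have hJT : (Jord n)ᵀ * ((Jord n)ᵀ)⁻¹ = 1 := Matrix.mul_nonsing_inv _ hdet
  have hinv : ((1 : Matrix (Fin n) (Fin n) ℂ) ⊗ₖ (Jord n)ᵀ)⁻¹
      = (1 : Matrix (Fin n) (Fin n) ℂ) ⊗ₖ ((Jord n)ᵀ)⁻¹ := by
    apply Matrix.inv_eq_right_inv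
    rw [← Matrix.mul_kronecker_mul, one_mul, hJT, Matrix.one_kronecker_one]
  rw [h1t, h1u, hinv, ← Matrix.mul_kronecker_mul, mul_one, one_mul,
    Matrix.transpose_nonsing_inv]
end
end

section
/- Let n ≥ 1 and let N ∈ Mat_{n²×n²}(ℂ) be built from the blocks A₀, …, A_{n−1} as in the definition below. Then for every r ∈ ℕ, the power N^r is block upper-triangular and block-Toeplitz: its (p,q)-block (1 ≤ p, q ≤ n) equals N_{q−p}^{(r)} if q ≥ p and 0 otherwise, where for 0 ≤ i ≤ n−1, N_i^{(r)} = Σ_{k=0}^{r} binom(r,k) · A₀^{r−k} · Σ_{s ∈ S_i^k} Π_{l=0}^{k−1} A_{s_l − s_{l+1}}, with S_i^k = {(s_0, …, s_k) ∈ ℕ^{k+1} : s_0 = i, s_k = 0, s_{j+1} < s_j for 0 ≤ j ≤ k−1} (the empty product for k = 0 equals the identity matrix). -/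
open Complex Matrix
open scoped TensorProduct

noncomputable section

open Fin.NatCast in
/-- The block N_i^{(r)} = Σ_{k=0}^r binom(r,k)·A₀^{r−k}·Σ_{s ∈ S_i^k} Π_{l=0}^{k−1}
A_{s_l − s_{l+1}}, where S_i^k is the set of strictly decreasing (k+1)-tuples from i to 0. -/
def Nblk (n i r : ℕ) : Matrix (Fin n) (Fin n) ℂ :=
  ∑ k ∈ Finset.range (r + 1), (r.choose k : ℂ) •
    ((Ablock n 0) ^ (r - k) *
      ∑ s ∈ (Finset.univ.filter fun s : Fin (k + 1) → Fin (i + 1) =>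
          ((s 0 : ℕ) = i) ∧ ((s (Fin.last k) : ℕ) = 0) ∧
          ∀ j : Fin k, (s j.succ : ℕ) < (s j.castSucc : ℕ)),
        ((List.range k).map fun l =>
          Ablock n ((s (l : Fin (k + 1)) : ℕ) - (s (((l + 1 : ℕ)) : Fin (k + 1)) : ℕ))).prod)

open Fin.NatCast

def cCoef (d : ℕ) : ℂ := -((-1 : ℂ) ^ d / (d : ℂ))
lemma Ablock_pos (n d : ℕ) (hd : d ≠ 0) :
    Ablock n d = cCoef d • (1 : Matrix (Fin n) (Fin n) ℂ) := by
  simp [Ablock, hd, cCoef]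
def Tgen (n k i m : ℕ) : Matrix (Fin n) (Fin n) ℂ :=
  ∑ s ∈ (Finset.univ.filter fun s : Fin (k + 1) → Fin (m + 1) =>
      ((s 0 : ℕ) = i) ∧ ((s (Fin.last k) : ℕ) = 0) ∧
      ∀ j : Fin k, (s j.succ : ℕ) < (s j.castSucc : ℕ)),
    ((List.range k).map fun l =>
      Ablock n ((s (l : Fin (k + 1)) : ℕ) - (s (((l + 1 : ℕ)) : Fin (k + 1)) : ℕ))).prod
def tCoef : ℕ → ℕ → ℂ
  | i, 0 => if i = 0 then 1 else 0
  | i, (k+1) => ∑ v ∈ Finset.range i, cCoef (i - v) * tCoef v k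

lemma finzero (x : Fin (0 + 1)) : x = 0 := by
  have := x.isLt; exact Fin.ext (by omega)

lemma Tgen_zero (n i m : ℕ) :
    Tgen n 0 i m = tCoef i 0 • (1 : Matrix (Fin n) (Fin n) ℂ) := by
  rcases eq_or_ne i 0 with rfl | hi
  · rw [Tgen]
    have hf : (Finset.univ.filter fun s : Fin (0 + 1) → Fin (m + 1) =>
        ((s 0 : ℕ) = 0) ∧ ((s (Fin.last 0) : ℕ) = 0) ∧
        ∀ j : Fin 0, (s j.succ : ℕ) < (s j.castSucc : ℕ)) = {fun _ => (0 : Fin (m+1))} := by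
      ext s
      simp only [Finset.mem_filter, Finset.mem_univ, true_and, Finset.mem_singleton]
      constructor
      · rintro ⟨h1, -, -⟩
        funext x; rw [finzero x]; exact Fin.ext h1
      · rintro rfl
        exact ⟨rfl, rfl, fun j => j.elim0⟩
    rw [hf]
    simp [tCoef]
  · rw [Tgen]
    have hf : (Finset.univ.filter fun s : Fin (0 + 1) → Fin (m + 1) =>
        ((s 0 : ℕ) = i) ∧ ((s (Fin.last 0) : ℕ) = 0) ∧
        ∀ j : Fin 0, (s j.succ : ℕ) < (s j.castSucc : ℕ)) = ∅ := by
      ext s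
      simp only [Finset.mem_filter, Finset.mem_univ, true_and, Finset.notMem_empty, iff_false]
      rintro ⟨h1, h2, -⟩
      have : s (Fin.last 0) = s 0 := by rw [finzero (Fin.last 0)]
      omega
    rw [hf]
    simp [tCoef, hi]

lemma cast_fin_val {k : ℕ} (l : ℕ) (h : l < k + 1) : ((l : Fin (k+1)) : ℕ) = l := by
  exact Fin.val_cast_of_lt h

lemma cons_nat_succ {k m : ℕ} (a : Fin (m+1)) (g : Fin (k+1) → Fin (m+1)) (l : ℕ) (h : l < k + 1) :
    (Fin.cons a g : Fin (k+2) → Fin (m+1)) (((l + 1 : ℕ)) : Fin (k+2)) = g ((l : ℕ) : Fin (k+1)) := by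
  have h1 : (((l + 1 : ℕ)) : Fin (k+2)) = ((l : ℕ) : Fin (k+1)).succ := by
    apply Fin.ext
    rw [Fin.val_cast_of_lt (show l+1 < k+2 by omega), Fin.val_succ, Fin.val_cast_of_lt h]
  rw [h1, Fin.cons_succ]

lemma prod_cons (n k m : ℕ) (a : Fin (m+1)) (g : Fin (k+1) → Fin (m+1)) :
    ((List.range (k+1)).map fun l => Ablock n
        (((Fin.cons a g : Fin (k+2) → Fin (m+1)) ((l : ℕ) : Fin (k+2)) : ℕ) -
          ((Fin.cons a g : Fin (k+2) → Fin (m+1)) (((l + 1 : ℕ)) : Fin (k+2)) : ℕ))).prod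
    = Ablock n ((a : ℕ) - (g 0 : ℕ)) *
      ((List.range k).map fun l => Ablock n
        ((g ((l : ℕ) : Fin (k+1)) : ℕ) - (g (((l + 1 : ℕ)) : Fin (k+1)) : ℕ))).prod := by
  rw [List.range_succ_eq_map, List.map_cons, List.prod_cons, List.map_map]
  congr 1
  · congr 1
    apply List.map_congr_left
    intro l hl
    rw [List.mem_range] at hl
    simp only [Function.comp_apply, Nat.succ_eq_add_one]
    rw [cons_nat_succ a g l (by omega), cons_nat_succ a g (l+1) (by omega)]

def consEquiv (k m : ℕ) : (Fin (m+1) × (Fin (k+1) → Fin (m+1))) ≃ (Fin (k+2) → Fin (m+1)) where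
  toFun p := Fin.cons p.1 p.2
  invFun s := (s 0, fun j => s j.succ)
  left_inv p := by
    refine Prod.ext ?_ ?_
    · simp
    · funext j; simp
  right_inv s := Fin.cons_self_tail s

lemma cons_last {k m : ℕ} (a : Fin (m+1)) (g : Fin (k+1) → Fin (m+1)) :
    (Fin.cons a g : Fin (k+2) → Fin (m+1)) (Fin.last (k+1)) = g (Fin.last k) := by
  rw [← Fin.succ_last, Fin.cons_succ]

lemma cons_forall_lt {k m : ℕ} (a : Fin (m+1)) (g : Fin (k+1) → Fin (m+1)) :
    (∀ j : Fin (k+1), ((Fin.cons a g : Fin (k+2) → Fin (m+1)) j.succ : ℕ) <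
        ((Fin.cons a g : Fin (k+2) → Fin (m+1)) j.castSucc : ℕ)) ↔
      ((g 0 : ℕ) < (a : ℕ) ∧ ∀ j : Fin k, (g j.succ : ℕ) < (g j.castSucc : ℕ)) := by
  constructor
  · intro h
    constructor
    · have := h 0
      simpa using this
    · intro j
      have := h j.succ
      rwa [Fin.cons_succ, ← Fin.succ_castSucc, Fin.cons_succ] at this
  · rintro ⟨h1, h2⟩ j
    induction j using Fin.cases with
    | zero => simpa using h1
    | succ j => rw [Fin.cons_succ, ← Fin.succ_castSucc, Fin.cons_succ]; exact h2 j

lemma listFix {β : Type*} (k : ℕ) (F : Fin (k+1) → β) :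
    List.map F ((List.range k).flatMap fun a => [((a : ℕ) : Fin (k+1))]) =
      List.map (fun l : ℕ => F ((l : ℕ) : Fin (k+1))) (List.range k) := by
  rw [show ((List.range k).flatMap fun a => [((a : ℕ) : Fin (k+1))]) =
      (List.range k).map (fun a : ℕ => ((a : ℕ) : Fin (k+1))) from
    List.flatMap_pure_eq_map _ _, List.map_map]
  rfl

lemma Tgen_natform (n k i m : ℕ) :
    Tgen n k i m = ∑ s ∈ (Finset.univ.filter fun s : Fin (k + 1) → Fin (m + 1) =>
        ((s 0 : ℕ) = i) ∧ ((s (Fin.last k) : ℕ) = 0) ∧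
        ∀ j : Fin k, (s j.succ : ℕ) < (s j.castSucc : ℕ)),
      ((List.range k).map fun l : ℕ =>
        Ablock n ((s ((l : ℕ) : Fin (k + 1)) : ℕ) - (s (((l + 1 : ℕ)) : Fin (k + 1)) : ℕ))).prod := by
  rw [Tgen]
  apply Finset.sum_congr rfl
  intro s _
  simp only [List.bind_eq_flatMap, List.pure_def]
  rw [listFix]
  apply congrArg
  apply List.map_congr_left
  intro a ha
  rw [List.mem_range] at ha
  show Ablock n _ = Ablock n _
  rw [Fin.val_cast_of_lt (show a < k + 1 by omega)]

lemma Tgen_eq (n : ℕ) : ∀ (k i m : ℕ), i ≤ m → Tgen n k i m = tCoef i k • (1 : Matrix (Fin n) (Fin n) ℂ) := by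
  intro k
  induction k with
  | zero => intro i m _; exact Tgen_zero n i m
  | succ k IH =>
    intro i m hi
    have step1 : Tgen n (k+1) i m =
        ∑ p : Fin (m+1) × (Fin (k+1) → Fin (m+1)),
          (if (((Fin.cons p.1 p.2 : Fin (k+2) → Fin (m+1)) 0 : ℕ) = i ∧
              (((Fin.cons p.1 p.2 : Fin (k+2) → Fin (m+1)) (Fin.last (k+1)) : ℕ) = 0) ∧
              (∀ j : Fin (k+1), ((Fin.cons p.1 p.2 : Fin (k+2) → Fin (m+1)) j.succ : ℕ) <
                ((Fin.cons p.1 p.2 : Fin (k+2) → Fin (m+1)) j.castSucc : ℕ)))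
           then ((List.range (k+1)).map fun l => Ablock n
              (((Fin.cons p.1 p.2 : Fin (k+2) → Fin (m+1)) ((l : ℕ) : Fin (k+2)) : ℕ) -
               ((Fin.cons p.1 p.2 : Fin (k+2) → Fin (m+1)) (((l + 1 : ℕ)) : Fin (k+2)) : ℕ))).prod
           else 0) := by
      rw [Tgen_natform, Finset.sum_filter]
      symm
      exact Fintype.sum_equiv (consEquiv k m) _ _ fun p => rfl
    rw [step1, Fintype.sum_prod_type]
    simp only [Fin.cons_zero, cons_last, cons_forall_lt, prod_cons]
    have him1 : i < m + 1 := by omega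
    rw [Finset.sum_eq_single (⟨i, him1⟩ : Fin (m+1))]
    rotate_left
    · intro b _ hb
      apply Finset.sum_eq_zero
      intro g _
      rw [if_neg]
      rintro ⟨h1, -⟩
      exact hb (Fin.ext h1)
    · intro h; exact absurd (Finset.mem_univ _) h
    have hval : ((⟨i, him1⟩ : Fin (m+1)) : ℕ) = i := rfl
    simp only [hval, true_and, eq_self_iff_true]
    have swap : ∀ g : Fin (k+1) → Fin (m+1),
        (if ((g (Fin.last k) : ℕ) = 0 ∧ (g 0 : ℕ) < i ∧
            ∀ j : Fin k, (g j.succ : ℕ) < (g j.castSucc : ℕ))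
          then Ablock n (i - (g 0 : ℕ)) *
            ((List.range k).map fun l => Ablock n
              ((g ((l : ℕ) : Fin (k+1)) : ℕ) - (g (((l + 1 : ℕ)) : Fin (k+1)) : ℕ))).prod
          else 0)
        = ∑ v ∈ Finset.range i,
            (if ((g 0 : ℕ) = v ∧ (g (Fin.last k) : ℕ) = 0 ∧
                ∀ j : Fin k, (g j.succ : ℕ) < (g j.castSucc : ℕ))
              then Ablock n (i - v) *
                ((List.range k).map fun l => Ablock n
                  ((g ((l : ℕ) : Fin (k+1)) : ℕ) - (g (((l + 1 : ℕ)) : Fin (k+1)) : ℕ))).prod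
              else 0) := by
      intro g
      by_cases h : ((g (Fin.last k) : ℕ) = 0 ∧ (g 0 : ℕ) < i ∧
          ∀ j : Fin k, (g j.succ : ℕ) < (g j.castSucc : ℕ))
      · rw [if_pos h, Finset.sum_eq_single ((g 0 : ℕ))]
        · rw [if_pos ⟨rfl, h.1, h.2.2⟩]
        · intro b _ hb
          rw [if_neg]
          rintro ⟨h1, -⟩
          exact hb (h1 ▸ rfl)
        · intro hnot; exact absurd (Finset.mem_range.mpr h.2.1) hnot
      · rw [if_neg h, eq_comm]
        apply Finset.sum_eq_zero
        intro v hv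
        rw [if_neg]
        rintro ⟨h1, h2, h3⟩
        exact h ⟨h2, by rw [h1]; exact Finset.mem_range.mp hv, h3⟩
    rw [Finset.sum_congr rfl (fun g _ => swap g), Finset.sum_comm]
    have inner : ∀ v ∈ Finset.range i,
        (∑ g : Fin (k+1) → Fin (m+1),
          if ((g 0 : ℕ) = v ∧ (g (Fin.last k) : ℕ) = 0 ∧
              ∀ j : Fin k, (g j.succ : ℕ) < (g j.castSucc : ℕ))
            then Ablock n (i - v) *
              ((List.range k).map fun l : ℕ => Ablock n
                ((g ((l : ℕ) : Fin (k+1)) : ℕ) - (g (((l + 1 : ℕ)) : Fin (k+1)) : ℕ))).prod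
            else 0)
        = (cCoef (i - v) * tCoef v k) • 1 := by
      intro v hv
      rw [Finset.mem_range] at hv
      have h1 : (∑ g : Fin (k+1) → Fin (m+1),
          if ((g 0 : ℕ) = v ∧ (g (Fin.last k) : ℕ) = 0 ∧
              ∀ j : Fin k, (g j.succ : ℕ) < (g j.castSucc : ℕ))
            then Ablock n (i - v) *
              ((List.range k).map fun l : ℕ => Ablock n
                ((g ((l : ℕ) : Fin (k+1)) : ℕ) - (g (((l + 1 : ℕ)) : Fin (k+1)) : ℕ))).prod
            else 0)
          = Ablock n (i - v) * ∑ g : Fin (k+1) → Fin (m+1),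
            if ((g 0 : ℕ) = v ∧ (g (Fin.last k) : ℕ) = 0 ∧
                ∀ j : Fin k, (g j.succ : ℕ) < (g j.castSucc : ℕ))
              then ((List.range k).map fun l : ℕ => Ablock n
                ((g ((l : ℕ) : Fin (k+1)) : ℕ) - (g (((l + 1 : ℕ)) : Fin (k+1)) : ℕ))).prod
              else 0 := by
        rw [Finset.mul_sum]
        apply Finset.sum_congr rfl
        intro g _
        rw [mul_ite, mul_zero]
      rw [h1, ← Finset.sum_filter, ← Tgen_natform, IH v m (by omega),
        Ablock_pos n (i - v) (by omega), smul_mul_assoc, one_mul, smul_smul]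
    rw [Finset.sum_congr rfl inner, ← Finset.sum_smul]
    rfl

lemma Nblk_form (n i r : ℕ) :
    Nblk n i r = ∑ k ∈ Finset.range (r + 1),
      ((r.choose k : ℂ) * tCoef i k) • (Ablock n 0) ^ (r - k) := by
  rw [Nblk]
  apply Finset.sum_congr rfl
  intro k _
  have h := Tgen_eq n k i i le_rfl
  rw [Tgen] at h
  rw [h, mul_smul_comm, mul_one, smul_smul]

lemma Nblk_rec (n i r : ℕ) :
    Nblk n i (r + 1) = ∑ v ∈ Finset.range (i + 1), Ablock n (i - v) * Nblk n v r := by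
  rw [Finset.sum_range_succ, Nat.sub_self]
  have hv : ∀ v ∈ Finset.range i, Ablock n (i - v) * Nblk n v r
      = ∑ k ∈ Finset.range (r + 1),
        ((r.choose k : ℂ) * (cCoef (i - v) * tCoef v k)) • (Ablock n 0) ^ (r - k) := by
    intro v hv
    rw [Finset.mem_range] at hv
    rw [Nblk_form, Finset.mul_sum, Ablock_pos n (i - v) (by omega)]
    apply Finset.sum_congr rfl
    intro k _
    rw [smul_mul_assoc, one_mul, smul_smul]
    ring_nf
  rw [Finset.sum_congr rfl hv, Finset.sum_comm]
  have hlast : Ablock n 0 * Nblk n i r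
      = ∑ k ∈ Finset.range (r + 1), ((r.choose k : ℂ) * tCoef i k) • (Ablock n 0) ^ ((r - k) + 1) := by
    rw [Nblk_form, Finset.mul_sum]
    apply Finset.sum_congr rfl
    intro k _
    rw [mul_smul_comm, ← pow_succ']
  rw [hlast]
  have hinner : ∀ k ∈ Finset.range (r + 1),
      (∑ v ∈ Finset.range i, ((r.choose k : ℂ) * (cCoef (i - v) * tCoef v k)) • (Ablock n 0) ^ (r - k))
      = ((r.choose k : ℂ) * tCoef i (k + 1)) • (Ablock n 0) ^ (r - k) := by
    intro k _
    rw [← Finset.sum_smul]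
    congr 1
    have : tCoef i (k + 1) = ∑ v ∈ Finset.range i, cCoef (i - v) * tCoef v k := rfl
    rw [this, Finset.mul_sum]
  rw [Finset.sum_congr rfl hinner]
  -- LHS: expand over range (r+2)
  rw [Nblk_form n i (r + 1), Finset.sum_range_succ' _ (r + 1)]
  have hps : ∀ k ∈ Finset.range (r + 1),
      (((r+1).choose (k+1) : ℂ) * tCoef i (k + 1)) • (Ablock n 0) ^ (r + 1 - (k + 1))
      = ((r.choose k : ℂ) * tCoef i (k + 1)) • (Ablock n 0) ^ (r - k)
        + ((r.choose (k+1) : ℂ) * tCoef i (k + 1)) • (Ablock n 0) ^ (r - k) := by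
    intro k _
    have he : r + 1 - (k + 1) = r - k := by omega
    rw [he, Nat.choose_succ_succ, Nat.cast_add, add_mul, add_smul]
  rw [Finset.sum_congr rfl hps, Finset.sum_add_distrib, add_assoc]
  congr 1
  rw [Finset.sum_range_succ' (fun k => ((r.choose k : ℂ) * tCoef i k) • (Ablock n 0) ^ ((r - k) + 1)) r]
  congr 1
  · rw [Finset.sum_range_succ]
    simp only [Nat.choose_succ_self, Nat.cast_zero, zero_mul, zero_smul, add_zero]
    apply Finset.sum_congr rfl
    intro k hk
    rw [Finset.mem_range] at hk
    have he : r - k = (r - (k + 1)) + 1 := by omega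
    rw [he]
  · norm_num

/-- N^r is block upper-triangular and block-Toeplitz, with (p,q)-block N_{q−p}^{(r)}. -/
theorem Nmat_pow_block_formula (n : ℕ) (hn : 1 ≤ n) (r : ℕ) (p q i j : Fin n) :
    ((Nmat n) ^ r) (p, i) (q, j) =
      if (p : ℕ) ≤ (q : ℕ) then Nblk n ((q : ℕ) - (p : ℕ)) r i j else 0 := by
  induction r generalizing p q i j with
  | zero =>
    rw [pow_zero]
    have hd : ∀ d : ℕ, Nblk n d 0 = tCoef d 0 • (1 : Matrix (Fin n) (Fin n) ℂ) := by
      intro d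
      rw [Nblk_form, Finset.sum_range_one]
      simp
    rcases le_or_gt (p : ℕ) (q : ℕ) with h | h
    · rw [if_pos h, hd]
      by_cases hpq : (p : ℕ) = (q : ℕ)
      · have hpq' : p = q := Fin.ext hpq
        subst hpq'
        simp [tCoef, Matrix.one_apply, Prod.ext_iff, Nat.sub_self]
      · have h0 : (q : ℕ) - (p : ℕ) ≠ 0 := by omega
        have hne : (p, i) ≠ (q, j) := by
          simp only [ne_eq, Prod.mk.injEq, not_and]
          intro hc; exact absurd (congrArg Fin.val hc) hpq
        rw [Matrix.one_apply_ne hne]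
        simp [tCoef, h0]
    · rw [if_neg (by omega)]
      have hne : (p, i) ≠ (q, j) := by
        simp only [ne_eq, Prod.mk.injEq, not_and]
        intro hc; exact absurd (congrArg Fin.val hc) (by omega)
      rw [Matrix.one_apply_ne hne]
  | succ r IH =>
    rw [pow_succ', Matrix.mul_apply, Fintype.sum_prod_type]
    have h1 : ∀ t : Fin n,
        (∑ m : Fin n, Nmat n (p, i) (t, m) * (Nmat n ^ r) ((t, m)) ((q, j)))
        = if ((p : ℕ) ≤ (t : ℕ) ∧ (t : ℕ) ≤ (q : ℕ))
            then (Ablock n ((t : ℕ) - (p : ℕ)) * Nblk n ((q : ℕ) - (t : ℕ)) r) i j else 0 := by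
      intro t
      by_cases h : ((p : ℕ) ≤ (t : ℕ) ∧ (t : ℕ) ≤ (q : ℕ))
      · rw [if_pos h, Matrix.mul_apply]
        apply Finset.sum_congr rfl
        intro m _
        rw [IH, if_pos h.2]
        congr 1
        show (if (p : ℕ) ≤ (t : ℕ) then Ablock n ((t : ℕ) - (p : ℕ)) i m else 0) = _
        rw [if_pos h.1]
      · rw [if_neg h]
        apply Finset.sum_eq_zero
        intro m _
        rw [IH]
        by_cases h2 : (p : ℕ) ≤ (t : ℕ)
        · have h3 : ¬ (t : ℕ) ≤ (q : ℕ) := fun hc => h ⟨h2, hc⟩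
          rw [if_neg h3, mul_zero]
        · have hz : Nmat n (p, i) (t, m) = 0 := by
            show (if (p : ℕ) ≤ (t : ℕ) then Ablock n ((t : ℕ) - (p : ℕ)) i m else 0) = 0
            rw [if_neg h2]
          rw [hz, zero_mul]
    rw [Finset.sum_congr rfl (fun t _ => h1 t)]
    rcases le_or_gt (p : ℕ) (q : ℕ) with h | h
    · rw [if_pos h, Nblk_rec, Matrix.sum_apply]
      rw [Fin.sum_univ_eq_sum_range (fun c =>
        if ((p : ℕ) ≤ c ∧ c ≤ (q : ℕ))
          then (Ablock n (c - (p : ℕ)) * Nblk n ((q : ℕ) - c) r) i j else 0) n]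
      rw [← Finset.sum_filter]
      have hfe : Finset.filter (fun c => (p : ℕ) ≤ c ∧ c ≤ (q : ℕ)) (Finset.range n)
          = Finset.Icc (p : ℕ) (q : ℕ) := by
        ext c
        simp only [Finset.mem_filter, Finset.mem_range, Finset.mem_Icc]
        have := q.isLt
        omega
      rw [hfe, ← Finset.Ico_add_one_right_eq_Icc, Finset.sum_Ico_eq_sum_range]
      have hq2 : (q : ℕ) + 1 - (p : ℕ) = ((q : ℕ) - (p : ℕ)) + 1 := by omega
      rw [hq2]
      conv_rhs => rw [← Finset.sum_range_reflect]
      apply Finset.sum_congr rfl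
      intro v hv
      rw [Finset.mem_range] at hv
      have e1 : (p : ℕ) + v - (p : ℕ)
          = (q : ℕ) - (p : ℕ) - ((q : ℕ) - (p : ℕ) + 1 - 1 - v) := by omega
      have e2 : (q : ℕ) - ((p : ℕ) + v) = (q : ℕ) - (p : ℕ) + 1 - 1 - v := by omega
      rw [e1, e2]
    · rw [if_neg (by omega)]
      apply Finset.sum_eq_zero
      intro t _
      rw [if_neg]
      rintro ⟨h1', h2'⟩
      omega
end
end
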